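/- arXiv:1212.3776 — 6 statements merged into one kernel-verified Lean document; each statement's English description precedes it below -/
import Mathlib

section
/- Let E be a closed preordered space (a topological space equipped with a preorder whose graph is closed in E × E). Then for every compact set K ⊆ E, the decreasing hull d(K) and the increasing hull i(K) are closed sets in E. -/
/-- The increasing hull `i(S) = {y | ∃ x ∈ S, x ≤ y}`. -/
def incHull {E : Type*} [Preorder E] (S : Set E) : Set E := {y | ∃ x ∈ S, x ≤ y}

/-- The decreasing hull `d(S) = {y | ∃ x ∈ S, y ≤ x}`. -/
def decHull {E : Type*} [Preorder E] (S : Set E) : Set E := {y | ∃ x ∈ S, y ≤ x}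

lemma aux_closed_rel {E : Type*} [TopologicalSpace E] {G : Set (E × E)} (hG : IsClosed G)
    {K : Set E} (hK : IsCompact K) : IsClosed {y | ∃ x ∈ K, (y, x) ∈ G} := by
  haveI : CompactSpace K := isCompact_iff_compactSpace.mp hK
  have heq : {y | ∃ x ∈ K, (y, x) ∈ G} =
      Prod.fst '' {p : E × K | (p.1, (p.2 : E)) ∈ G} := by
    ext y
    constructor
    · rintro ⟨x, hx, h⟩
      exact ⟨(y, ⟨x, hx⟩), h, rfl⟩
    · rintro ⟨⟨a, x⟩, h, rfl⟩
      exact ⟨x, x.2, h⟩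
  rw [heq]
  exact isClosedMap_fst_of_compactSpace _
    (hG.preimage (by continuity : Continuous fun p : E × K => (p.1, (p.2 : E))))

/-- In a closed preordered space, the decreasing and increasing hulls of a
compact set are closed. -/
theorem hulls_of_compact_isClosed {E : Type*} [TopologicalSpace E] [Preorder E]
    (hG : IsClosed {p : E × E | p.1 ≤ p.2})
    (K : Set E) (hK : IsCompact K) :
    IsClosed (decHull K) ∧ IsClosed (incHull K) := by
  constructor
  · exact aux_closed_rel hG hK
  · have hG' : IsClosed {p : E × E | p.2 ≤ p.1} :=
      hG.preimage (continuous_swap : Continuous (Prod.swap : E × E → E × E))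
    exact aux_closed_rel hG' hK
end

section
/- Let E be a compact closed preordered space. If F ⊆ E is an increasing set, V ⊆ E is an open set, and F ⊆ V, then there exists an open increasing set W with F ⊆ W ⊆ V. Dually, if F is a decreasing set contained in an open set V, there exists an open decreasing set W with F ⊆ W ⊆ V. -/
theorem isClosed_decHull_aux {E : Type*} [TopologicalSpace E] [Preorder E] [CompactSpace E]
    (hG : IsClosed {p : E × E | p.1 ≤ p.2}) {K : Set E} (hK : IsClosed K) :
    IsClosed (decHull K) := by
  have h : decHull K = Prod.fst '' ({p : E × E | p.1 ≤ p.2} ∩ Set.univ ×ˢ K) := by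
    ext y
    constructor
    · rintro ⟨x, hx, hyx⟩
      exact ⟨(y, x), ⟨hyx, Set.mem_univ _, hx⟩, rfl⟩
    · rintro ⟨⟨a, b⟩, ⟨hle, -, hb⟩, rfl⟩
      exact ⟨b, hb, hle⟩
  rw [h]
  exact isClosedMap_fst_of_compactSpace _ (hG.inter (isClosed_univ.prod hK))

theorem isClosed_incHull_aux {E : Type*} [TopologicalSpace E] [Preorder E] [CompactSpace E]
    (hG : IsClosed {p : E × E | p.1 ≤ p.2}) {K : Set E} (hK : IsClosed K) :
    IsClosed (incHull K) := by
  have h : incHull K = Prod.snd '' ({p : E × E | p.1 ≤ p.2} ∩ K ×ˢ Set.univ) := by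
    ext y
    constructor
    · rintro ⟨x, hx, hxy⟩
      exact ⟨(x, y), ⟨hxy, hx, Set.mem_univ _⟩, rfl⟩
    · rintro ⟨⟨a, b⟩, ⟨hle, ha, -⟩, rfl⟩
      exact ⟨a, ha, hle⟩
  rw [h]
  exact isClosedMap_snd_of_compactSpace _ (hG.inter (hK.prod isClosed_univ))

/-- In a compact closed preordered space, an increasing (resp. decreasing) set
contained in an open set `V` can be enlarged to an open increasing
(resp. open decreasing) set still contained in `V`. -/
theorem monotone_open_interpolation {E : Type*} [TopologicalSpace E] [Preorder E]
    [CompactSpace E]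
    (hG : IsClosed {p : E × E | p.1 ≤ p.2})
    (F V : Set E) (hV : IsOpen V) (hFV : F ⊆ V) :
    (incHull F = F → ∃ W : Set E, IsOpen W ∧ incHull W = W ∧ F ⊆ W ∧ W ⊆ V) ∧
    (decHull F = F → ∃ W : Set E, IsOpen W ∧ decHull W = W ∧ F ⊆ W ∧ W ⊆ V) := by
  constructor
  · intro hF
    refine ⟨(decHull Vᶜ)ᶜ, (isClosed_decHull_aux hG hV.isClosed_compl).isOpen_compl, ?_, ?_, ?_⟩
    · ext z
      constructor
      · rintro ⟨y, hy, hyz⟩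
        intro ⟨w, hw, hzw⟩
        exact hy ⟨w, hw, hyz.trans hzw⟩
      · intro hz
        exact ⟨z, hz, le_refl z⟩
    · intro x hx hmem
      obtain ⟨y, hy, hxy⟩ := hmem
      exact hy (hFV (hF ▸ ⟨x, hx, hxy⟩))
    · intro x hx
      by_contra hxV
      exact hx ⟨x, hxV, le_refl x⟩
  · intro hF
    refine ⟨(incHull Vᶜ)ᶜ, (isClosed_incHull_aux hG hV.isClosed_compl).isOpen_compl, ?_, ?_, ?_⟩
    · ext z
      constructor
      · rintro ⟨y, hy, hzy⟩
        intro ⟨w, hw, hwz⟩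
        exact hy ⟨w, hw, hwz.trans hzy⟩
      · intro hz
        exact ⟨z, hz, le_refl z⟩
    · intro x hx hmem
      obtain ⟨y, hy, hyx⟩ := hmem
      exact hy (hFV (hF ▸ ⟨x, hx, hyx⟩))
    · intro x hx
      by_contra hxV
      exact hx ⟨x, hxV, le_refl x⟩
end

section
/- Let E be a normally preordered space, let A ⊆ E be a closed decreasing set, B ⊆ E a closed increasing set, S ⊆ E a compact set, and O ⊆ E an open set such that A ∩ B ∩ S ⊆ O. Then there exist an open decreasing set U ⊇ A and an open increasing set V ⊇ B such that D(U) ∩ I(V) ∩ S ⊆ O, where D(U) is the smallest closed decreasing set containing U and I(V) is the smallest closed increasing set containing V. -/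
/-- `I(S)`: the smallest closed increasing set containing `S`. -/
def closedIncHull {E : Type*} [TopologicalSpace E] [Preorder E] (S : Set E) : Set E :=
  ⋂₀ {C : Set E | S ⊆ C ∧ IsClosed C ∧ incHull C = C}

/-- `D(S)`: the smallest closed decreasing set containing `S`. -/
def closedDecHull {E : Type*} [TopologicalSpace E] [Preorder E] (S : Set E) : Set E :=
  ⋂₀ {C : Set E | S ⊆ C ∧ IsClosed C ∧ decHull C = C}

section Aux
variable {E : Type*} [Preorder E]

lemma subset_decHull (S : Set E) : S ⊆ decHull S := fun x hx => ⟨x, hx, le_refl x⟩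
lemma subset_incHull (S : Set E) : S ⊆ incHull S := fun x hx => ⟨x, hx, le_refl x⟩

lemma decHull_eq_self_iff {S : Set E} : decHull S = S ↔ ∀ y z : E, y ≤ z → z ∈ S → y ∈ S := by
  constructor
  · intro h y z hyz hz; rw [← h]; exact ⟨z, hz, hyz⟩
  · intro h; apply subset_antisymm _ (subset_decHull S)
    rintro y ⟨z, hz, hyz⟩; exact h y z hyz hz

lemma incHull_eq_self_iff {S : Set E} : incHull S = S ↔ ∀ y z : E, y ≤ z → y ∈ S → z ∈ S := by
  constructor
  · intro h y z hyz hy; rw [← h]; exact ⟨y, hy, hyz⟩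
  · intro h; apply subset_antisymm _ (subset_incHull S)
    rintro z ⟨y, hy, hyz⟩; exact h y z hyz hy

lemma decHull_compl {V : Set E} (h : incHull V = V) : decHull Vᶜ = Vᶜ := by
  rw [decHull_eq_self_iff]
  intro y z hyz hz hy
  exact hz (incHull_eq_self_iff.mp h y z hyz hy)

lemma incHull_compl {V : Set E} (h : decHull V = V) : incHull Vᶜ = Vᶜ := by
  rw [incHull_eq_self_iff]
  intro y z hyz hy hz
  exact hy (decHull_eq_self_iff.mp h y z hyz hz)

lemma decHull_decHull (S : Set E) : decHull (decHull S) = decHull S := by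
  rw [decHull_eq_self_iff]
  rintro y z hyz ⟨w, hw, hzw⟩; exact ⟨w, hw, hyz.trans hzw⟩

lemma incHull_incHull (S : Set E) : incHull (incHull S) = incHull S := by
  rw [incHull_eq_self_iff]
  rintro y z hyz ⟨w, hw, hwy⟩; exact ⟨w, hw, hwy.trans hyz⟩

end Aux

section Aux2
variable {E : Type*} [TopologicalSpace E] [Preorder E]

lemma subset_closedDecHull (S : Set E) : S ⊆ closedDecHull S :=
  Set.subset_sInter fun _ hC => hC.1

lemma subset_closedIncHull (S : Set E) : S ⊆ closedIncHull S :=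
  Set.subset_sInter fun _ hC => hC.1

lemma closedDecHull_min {S C : Set E} (h : S ⊆ C) (hc : IsClosed C) (hd : decHull C = C) :
    closedDecHull S ⊆ C := Set.sInter_subset_of_mem ⟨h, hc, hd⟩

lemma closedIncHull_min {S C : Set E} (h : S ⊆ C) (hc : IsClosed C) (hd : incHull C = C) :
    closedIncHull S ⊆ C := Set.sInter_subset_of_mem ⟨h, hc, hd⟩

lemma isClosed_closedDecHull (S : Set E) : IsClosed (closedDecHull S) :=
  isClosed_sInter fun _ hC => hC.2.1

lemma isClosed_closedIncHull (S : Set E) : IsClosed (closedIncHull S) :=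
  isClosed_sInter fun _ hC => hC.2.1

lemma decHull_closedDecHull (S : Set E) : decHull (closedDecHull S) = closedDecHull S := by
  rw [decHull_eq_self_iff]
  intro y z hyz hz
  intro C hC
  exact decHull_eq_self_iff.mp hC.2.2 y z hyz (hz C hC)

lemma incHull_closedIncHull (S : Set E) : incHull (closedIncHull S) = closedIncHull S := by
  rw [incHull_eq_self_iff]
  intro y z hyz hy
  intro C hC
  exact incHull_eq_self_iff.mp hC.2.2 y z hyz (hy C hC)

end Aux2

/-- In a normally preordered space, given a closed decreasing set `A`, a closed
increasing set `B`, a compact set `S` and an open set `O` with `A ∩ B ∩ S ⊆ O`,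
there are an open decreasing `U ⊇ A` and an open increasing `V ⊇ B` with
`D(U) ∩ I(V) ∩ S ⊆ O`. -/
theorem normallyPreordered_convex_separation {E : Type*} [TopologicalSpace E] [Preorder E]
    (hT1 : ∀ x : E, IsClosed (incHull {x}) ∧ IsClosed (decHull {x}))
    (hNorm : ∀ A B : Set E, IsClosed A → decHull A = A → IsClosed B → incHull B = B →
      A ∩ B = ∅ → ∃ U V : Set E, IsOpen U ∧ decHull U = U ∧ IsOpen V ∧ incHull V = V ∧
        A ⊆ U ∧ B ⊆ V ∧ U ∩ V = ∅)
    (A B S O : Set E)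
    (hA : IsClosed A) (hAd : decHull A = A)
    (hB : IsClosed B) (hBi : incHull B = B)
    (hS : IsCompact S) (hO : IsOpen O)
    (hABS : A ∩ B ∩ S ⊆ O) :
    ∃ U V : Set E, IsOpen U ∧ decHull U = U ∧ A ⊆ U ∧
      IsOpen V ∧ incHull V = V ∧ B ⊆ V ∧
      closedDecHull U ∩ closedIncHull V ∩ S ⊆ O := by
  classical
  set K : Set E := S \ O with hK
  have hKc : IsCompact K := by
    rw [hK, Set.diff_eq]
    exact hS.inter_right hO.isClosed_compl
  have key : ∀ x : E, ∃ UV : Set E × Set E,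
      IsOpen UV.1 ∧ decHull UV.1 = UV.1 ∧ A ⊆ UV.1 ∧
      IsOpen UV.2 ∧ incHull UV.2 = UV.2 ∧ B ⊆ UV.2 ∧
      (x ∈ K → x ∉ closedDecHull UV.1 ∩ closedIncHull UV.2) := by
    intro x
    by_cases hx : x ∈ K
    · have hxAB : x ∉ A ∩ B := fun h => hx.2 (hABS ⟨h, hx.1⟩)
      by_cases hxA : x ∈ A
      · have hxB : x ∉ B := fun h => hxAB ⟨hxA, h⟩
        have hdis : decHull {x} ∩ B = ∅ := by
          ext y
          simp only [Set.mem_inter_iff, Set.mem_empty_iff_false, iff_false, not_and]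
          rintro ⟨z, hz, hyz⟩ hyB
          rw [Set.mem_singleton_iff] at hz
          exact hxB (incHull_eq_self_iff.mp hBi y x (hz ▸ hyz) hyB)
        obtain ⟨W, V, hWo, hWd, hVo, hVi, hdxW, hBV, hWV⟩ :=
          hNorm (decHull {x}) B (hT1 x).2 (decHull_decHull {x}) hB hBi hdis
        refine ⟨(Set.univ, V), isOpen_univ, ?_, Set.subset_univ A, hVo, hVi, hBV, ?_⟩
        · apply subset_antisymm _ (subset_decHull _)
          exact fun y _ => Set.mem_univ y
        · intro _ hmem
          have hVW : V ⊆ Wᶜ := fun y hy hyW =>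
            (Set.eq_empty_iff_forall_notMem.mp hWV y) ⟨hyW, hy⟩
          have : closedIncHull V ⊆ Wᶜ :=
            closedIncHull_min hVW hWo.isClosed_compl (incHull_compl hWd)
          exact this hmem.2 (hdxW (subset_decHull _ rfl))
      · have hdis : A ∩ incHull {x} = ∅ := by
          ext y
          simp only [Set.mem_inter_iff, Set.mem_empty_iff_false, iff_false, not_and]
          rintro hyA ⟨z, hz, hzy⟩
          rw [Set.mem_singleton_iff] at hz
          exact hxA (decHull_eq_self_iff.mp hAd x y (hz ▸ hzy) hyA)
        obtain ⟨U, W, hUo, hUd, hWo, hWi, hAU, hixW, hUW⟩ :=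
          hNorm A (incHull {x}) hA hAd (hT1 x).1 (incHull_incHull {x}) hdis
        refine ⟨(U, Set.univ), hUo, hUd, hAU, isOpen_univ, ?_, Set.subset_univ B, ?_⟩
        · apply subset_antisymm _ (subset_incHull _)
          exact fun y _ => Set.mem_univ y
        · intro _ hmem
          have hUW' : U ⊆ Wᶜ := fun y hy hyW =>
            (Set.eq_empty_iff_forall_notMem.mp hUW y) ⟨hy, hyW⟩
          have : closedDecHull U ⊆ Wᶜ :=
            closedDecHull_min hUW' hWo.isClosed_compl (decHull_compl hWi)
          exact this hmem.1 (hixW (subset_incHull _ rfl))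
    · refine ⟨(Set.univ, Set.univ), isOpen_univ, ?_, Set.subset_univ A,
        isOpen_univ, ?_, Set.subset_univ B, fun h => absurd h hx⟩
      · exact subset_antisymm (fun y _ => Set.mem_univ y) (subset_decHull _)
      · exact subset_antisymm (fun y _ => Set.mem_univ y) (subset_incHull _)
  choose UV hUo hUd hAU hVo hVi hBV hnot using key
  set U : E → Set E := fun x => (UV x).1
  set V : E → Set E := fun x => (UV x).2
  have hcov : K ⊆ ⋃ x : E, (closedDecHull (U x) ∩ closedIncHull (V x))ᶜ := by
    intro k hk
    exact Set.mem_iUnion.mpr ⟨k, hnot k hk⟩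
  obtain ⟨t, ht⟩ := hKc.elim_finite_subcover
    (fun x => (closedDecHull (U x) ∩ closedIncHull (V x))ᶜ)
    (fun x => ((isClosed_closedDecHull (U x)).inter (isClosed_closedIncHull (V x))).isOpen_compl)
    hcov
  refine ⟨⋂ x ∈ t, U x, ⋂ x ∈ t, V x, isOpen_biInter_finset (fun x _ => hUo x), ?_,
    Set.subset_iInter₂ (fun x _ => hAU x), isOpen_biInter_finset (fun x _ => hVo x), ?_,
    Set.subset_iInter₂ (fun x _ => hBV x), ?_⟩
  · rw [decHull_eq_self_iff]
    intro y z hyz hz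
    refine Set.mem_iInter₂.mpr fun x hx => ?_
    exact decHull_eq_self_iff.mp (hUd x) y z hyz (Set.mem_iInter₂.mp hz x hx)
  · rw [incHull_eq_self_iff]
    intro y z hyz hy
    refine Set.mem_iInter₂.mpr fun x hx => ?_
    exact incHull_eq_self_iff.mp (hVi x) y z hyz (Set.mem_iInter₂.mp hy x hx)
  · rintro s ⟨⟨hsD, hsI⟩, hsS⟩
    by_contra hsO
    have hsK : s ∈ K := ⟨hsS, hsO⟩
    obtain ⟨x, hxt, hsx⟩ := Set.mem_iUnion₂.mp (ht hsK)
    apply hsx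
    constructor
    · exact closedDecHull_min
        ((Set.biInter_subset_of_mem hxt).trans (subset_closedDecHull (U x)))
        (isClosed_closedDecHull (U x)) (decHull_closedDecHull (U x)) hsD
    · exact closedIncHull_min
        ((Set.biInter_subset_of_mem hxt).trans (subset_closedIncHull (V x)))
        (isClosed_closedIncHull (V x)) (incHull_closedIncHull (V x)) hsI
end

section
/- Let E be a closed preordered space and x ∈ E, and set [x] = d(x) ∩ i(x). If [x] admits a compact neighborhood (a compact set whose interior contains [x]), then for every open set O' with [x] ⊆ O' there exists a compact neighborhood of [x] contained in O'. In particular, if ≤ is antisymmetric at x (so [x] = {x}) and x has a compact neighborhood, then every open neighborhood of x contains a compact neighborhood of x. -/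
/-- In a closed preordered space, if `[x] = d(x) ∩ i(x)` admits a compact
neighborhood, then every open set containing `[x]` contains a compact
neighborhood of `[x]`. In particular, under antisymmetry at `x`, local
compactness at `x` implies strong local compactness at `x`. -/
theorem compact_nbhd_basis_of_classNbhd {E : Type*} [TopologicalSpace E] [Preorder E]
    (hG : IsClosed {p : E × E | p.1 ≤ p.2}) (x : E)
    (hnbhd : ∃ K : Set E, IsCompact K ∧ decHull {x} ∩ incHull {x} ⊆ interior K) :
    (∀ O' : Set E, IsOpen O' → decHull {x} ∩ incHull {x} ⊆ O' →
      ∃ K' : Set E, IsCompact K' ∧ decHull {x} ∩ incHull {x} ⊆ interior K' ∧ K' ⊆ O') ∧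
    ((∀ y : E, x ≤ y → y ≤ x → y = x) →
      ∀ O' : Set E, IsOpen O' → x ∈ O' →
        ∃ K' : Set E, IsCompact K' ∧ x ∈ interior K' ∧ K' ⊆ O') := by
  obtain ⟨K, hK, hKint⟩ := hnbhd
  set S : Set E := decHull {x} ∩ incHull {x} with hSdef
  have hSx : ∀ y, y ∈ S ↔ y ≤ x ∧ x ≤ y := by
    intro y
    simp [hSdef, decHull, incHull, Set.mem_inter_iff]
  -- S is closed
  have hSclosed : IsClosed S := by
    have h1 : IsClosed ((fun y : E => (y, x)) ⁻¹' {p : E × E | p.1 ≤ p.2}) :=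
      hG.preimage (Continuous.prodMk continuous_id continuous_const)
    have h2 : IsClosed ((fun y : E => (x, y)) ⁻¹' {p : E × E | p.1 ≤ p.2}) :=
      hG.preimage (Continuous.prodMk continuous_const continuous_id)
    have : S = ((fun y : E => (y, x)) ⁻¹' {p : E × E | p.1 ≤ p.2}) ∩
        ((fun y : E => (x, y)) ⁻¹' {p : E × E | p.1 ≤ p.2}) := by
      ext y; simp [hSx y, Set.mem_preimage]
    rw [this]; exact h1.inter h2
  have hScompact : IsCompact S :=
    hK.of_isClosed_subset hSclosed (hKint.trans interior_subset)
  -- separation from the closed graph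
  have sep : ∀ a b : E, ¬ a ≤ b →
      ∃ U W : Set E, IsOpen U ∧ IsOpen W ∧ a ∈ U ∧ b ∈ W ∧ Disjoint U W := by
    intro a b hab
    have hopen : IsOpen {p : E × E | p.1 ≤ p.2}ᶜ := hG.isOpen_compl
    rw [isOpen_prod_iff] at hopen
    obtain ⟨U, W, hU, hW, haU, hbW, hsub⟩ := hopen a b hab
    refine ⟨U, W, hU, hW, haU, hbW, Set.disjoint_left.2 fun p hpU hpW => ?_⟩
    exact hsub (Set.mk_mem_prod hpU hpW) (le_refl p)
  -- separating a point outside S from each point of S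
  have sep_pt : ∀ y ∈ S, ∀ z, z ∉ S →
      ∃ U W : Set E, IsOpen U ∧ IsOpen W ∧ z ∈ U ∧ y ∈ W ∧ Disjoint U W := by
    intro y hy z hz
    rw [hSx] at hy
    by_cases h1 : z ≤ x
    · have h2 : ¬ x ≤ z := fun h => hz ((hSx z).2 ⟨h1, h⟩)
      have hyz : ¬ y ≤ z := fun h => h2 (hy.2.trans h)
      obtain ⟨W, U, hW, hU, hyW, hzU, hd⟩ := sep y z hyz
      exact ⟨U, W, hU, hW, hzU, hyW, hd.symm⟩
    · have hzy : ¬ z ≤ y := fun h => h1 (h.trans hy.1)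
      exact sep z y hzy
  -- separating a point outside S from the compact set S
  have sep_set : ∀ z, z ∉ S →
      ∃ A B : Set E, IsOpen A ∧ IsOpen B ∧ S ⊆ A ∧ z ∈ B ∧ Disjoint A B := by
    intro z hz
    choose U W hU hW hzU hyW hd using fun (y : S) => sep_pt y y.2 z hz
    obtain ⟨t, ht⟩ := hScompact.elim_finite_subcover (fun y : S => W y)
      (fun y => hW y) (fun y hy => Set.mem_iUnion.2 ⟨⟨y, hy⟩, hyW ⟨y, hy⟩⟩)
    refine ⟨⋃ y ∈ t, W y, ⋂ y ∈ t, U y, isOpen_biUnion fun y _ => hW y,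
      isOpen_biInter_finset fun y _ => hU y, ht,
      Set.mem_iInter₂.2 fun y _ => hzU y, ?_⟩
    rw [Set.disjoint_left]
    intro p hp hp'
    obtain ⟨y, hyt, hpW⟩ := Set.mem_iUnion₂.1 hp
    have hpU : p ∈ U y := Set.mem_iInter₂.1 hp' y hyt
    exact (Set.disjoint_left.1 (hd y).symm hpW) hpU
  -- main part
  have main : ∀ O' : Set E, IsOpen O' → S ⊆ O' →
      ∃ K' : Set E, IsCompact K' ∧ S ⊆ interior K' ∧ K' ⊆ O' := by
    intro O' hO' hSO'
    set U : Set E := interior K ∩ O' with hUdef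
    have hUopen : IsOpen U := isOpen_interior.inter hO'
    have hSU : S ⊆ U := fun y hy => ⟨hKint hy, hSO' hy⟩
    set C : Set E := K \ U with hCdef
    have hCcompact : IsCompact C := hK.diff hUopen
    have hCz : ∀ z ∈ C, z ∉ S := fun z hz hzS => hz.2 (hSU hzS)
    choose A B hA hB hSA hzB hAB using fun (z : C) => sep_set z (hCz z z.2)
    obtain ⟨t, ht⟩ := hCcompact.elim_finite_subcover (fun z : C => B z)
      (fun z => hB z) (fun z hz => Set.mem_iUnion.2 ⟨⟨z, hz⟩, hzB ⟨z, hz⟩⟩)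
    set BB : Set E := ⋃ z ∈ t, B z with hBBdef
    have hBBopen : IsOpen BB := isOpen_biUnion fun z _ => hB z
    refine ⟨K \ BB, hK.diff hBBopen, ?_, ?_⟩
    · -- S ⊆ interior (K \ BB)
      set V : Set E := interior K ∩ ⋂ z ∈ t, A z with hVdef
      have hVopen : IsOpen V := isOpen_interior.inter (isOpen_biInter_finset fun z _ => hA z)
      have hSV : S ⊆ V := fun y hy => ⟨hKint hy, Set.mem_iInter₂.2 fun z _ => hSA z hy⟩
      have hVsub : V ⊆ K \ BB := by
        intro p hp
        refine ⟨interior_subset hp.1, fun hpBB => ?_⟩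
        obtain ⟨z, hzt, hpB⟩ := Set.mem_iUnion₂.1 hpBB
        exact Set.disjoint_left.1 (hAB z) (Set.mem_iInter₂.1 hp.2 z hzt) hpB
      exact fun y hy => interior_maximal hVsub hVopen (hSV hy)
    · -- K \ BB ⊆ O'
      intro p hp
      by_cases hpU : p ∈ U
      · exact hpU.2
      · exact absurd (ht ⟨hp.1, hpU⟩) hp.2
  refine ⟨main, fun hanti O' hO' hxO' => ?_⟩
  have hSeq : S = {x} := by
    ext y
    rw [hSx]
    constructor
    · rintro ⟨h1, h2⟩; exact hanti y h2 h1
    · intro h; simp only [Set.mem_singleton_iff] at h; subst h; exact ⟨le_refl y, le_refl y⟩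
  obtain ⟨K', hK', hSK', hK'O'⟩ := main O' hO' (by rw [hSeq]; simpa using hxO')
  exact ⟨K', hK', hSK' (by rw [hSeq]; rfl), hK'O'⟩
end

section
/- Every weakly convex closed preordered k_ω-space is a convex normally preordered space. -/
open Topology

/-- A subset `C` is (order) convex if `C = d(C) ∩ i(C)`. -/
def IsOrdConvex {E : Type*} [Preorder E] (C : Set E) : Prop :=
  decHull C ∩ incHull C = C

/-- A `k_ω`-space: there is an increasing sequence of compact sets covering the
space such that a set is open iff its trace on each compact set is open in the
subspace topology. -/
def IsKOmegaSpace (E : Type*) [TopologicalSpace E] : Prop :=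
  ∃ K : ℕ → Set E, (∀ n, IsCompact (K n)) ∧ (∀ n, K n ⊆ K (n + 1)) ∧
    (⋃ n, K n) = Set.univ ∧
    ∀ O : Set E, IsOpen O ↔ ∀ n, IsOpen {y : K n | (y : E) ∈ O}

section Toolkit

variable {X : Type*} [TopologicalSpace X]

/-- `U` is the trace on `K` of an open set. -/
def relOpenIn (K U : Set X) : Prop := ∃ O : Set X, IsOpen O ∧ U = O ∩ K

/-- `U` is a down-set of `K` relative to relation `r`. -/
def rDecIn (r : X → X → Prop) (K U : Set X) : Prop :=
  ∀ ⦃z u : X⦄, z ∈ K → u ∈ U → r z u → z ∈ U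

/-- upward hull -/
def rHullUp (r : X → X → Prop) (S : Set X) : Set X := {y | ∃ x ∈ S, r x y}

lemma relOpenIn.subset {K U : Set X} (h : relOpenIn K U) : U ⊆ K := by
  obtain ⟨O, _, rfl⟩ := h; exact Set.inter_subset_right

lemma relOpenIn.inter {K U V : Set X} (hU : relOpenIn K U) (hV : relOpenIn K V) :
    relOpenIn K (U ∩ V) := by
  obtain ⟨O1, h1, rfl⟩ := hU; obtain ⟨O2, h2, rfl⟩ := hV
  exact ⟨O1 ∩ O2, h1.inter h2, by ext z; simp [Set.mem_inter_iff]; tauto⟩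

omit [TopologicalSpace X] in
lemma rDecIn.inter {r : X → X → Prop} {K U V : Set X} (hU : rDecIn r K U)
    (hV : rDecIn r K V) : rDecIn r K (U ∩ V) :=
  fun _ _ hz hu hr => ⟨hU hz hu.1 hr, hV hz hu.2 hr⟩

lemma isClosed_rHullUp {r : X → X → Prop} (hG : IsClosed {p : X × X | r p.1 p.2})
    {K : Set X} (hK : IsCompact K) : IsClosed (rHullUp r K) := by
  rw [← isOpen_compl_iff, isOpen_iff_mem_nhds]
  intro y hy
  have hN : IsOpen {p : X × X | ¬ r p.1 p.2} := by
    have := hG.isOpen_compl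
    exact this
  have hsub : K ×ˢ ({y} : Set X) ⊆ {p : X × X | ¬ r p.1 p.2} := by
    rintro ⟨a, b⟩ ⟨ha, hb⟩
    rcases hb with rfl
    exact fun hr => hy ⟨a, ha, hr⟩
  obtain ⟨u, v, hu, hv, hKu, hyv, huv⟩ :=
    generalized_tube_lemma hK isCompact_singleton hN hsub
  refine Filter.mem_of_superset (hv.mem_nhds (hyv rfl)) ?_
  rintro w hw ⟨a, ha, hr⟩
  exact huv (Set.mk_mem_prod (hKu ha) hw) hr

/-- Shrink an open neighborhood of a relative down-set `S` inside a compact `K`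
to a *relatively open* relative down-set. -/
lemma shrinkDn {r : X → X → Prop} (hG : IsClosed {p : X × X | r p.1 p.2})
    (hrefl : ∀ x, r x x) (htrans : ∀ {a b c}, r a b → r b c → r a c)
    {K S U₀ : Set X} (hK : IsCompact K) (hSK : S ⊆ K) (hSdec : rDecIn r K S)
    (hU₀ : IsOpen U₀) (hSU : S ⊆ U₀) :
    ∃ U, relOpenIn K U ∧ rDecIn r K U ∧ S ⊆ U ∧ U ⊆ U₀ := by
  have hKc : IsCompact (K ∩ U₀ᶜ) := hK.inter_right hU₀.isClosed_compl
  have hW : IsClosed (rHullUp r (K ∩ U₀ᶜ)) := isClosed_rHullUp hG hKc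
  refine ⟨(rHullUp r (K ∩ U₀ᶜ))ᶜ ∩ K, ⟨_, hW.isOpen_compl, rfl⟩, ?_, ?_, ?_⟩
  · rintro z u hz ⟨hu1, hu2⟩ hr
    refine ⟨fun hzW => ?_, hz⟩
    obtain ⟨w, hw, hwz⟩ := hzW
    exact hu1 ⟨w, hw, htrans hwz hr⟩
  · intro s hs
    refine ⟨fun hsW => ?_, hSK hs⟩
    obtain ⟨w, hw, hws⟩ := hsW
    exact hw.2 (hSU (hSdec hw.1 hs hws))
  · rintro u ⟨hu1, hu2⟩
    by_contra h
    exact hu1 ⟨u, ⟨hu2, h⟩, hrefl u⟩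

/-- Nachbin-type separation in a compact set, relative version. -/
lemma relNachbin {r : X → X → Prop} (hG : IsClosed {p : X × X | r p.1 p.2})
    (hrefl : ∀ x, r x x) (htrans : ∀ {a b c}, r a b → r b c → r a c)
    {K S T : Set X} (hK : IsCompact K) (hS : IsCompact S) (hT : IsCompact T)
    (hSK : S ⊆ K) (hTK : T ⊆ K)
    (hSdec : rDecIn r K S) (hTinc : rDecIn (fun a b => r b a) K T)
    (hdisj : ∀ s ∈ S, ∀ t ∈ T, ¬ r t s) :
    ∃ U V, relOpenIn K U ∧ rDecIn r K U ∧ relOpenIn K V ∧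
      rDecIn (fun a b => r b a) K V ∧ S ⊆ U ∧ T ⊆ V ∧ U ∩ V = ∅ := by
  have hN : IsOpen {p : X × X | ¬ r p.2 p.1} := by
    have : IsClosed {p : X × X | r p.2 p.1} :=
      hG.preimage (continuous_snd.prodMk continuous_fst)
    exact this.isOpen_compl
  have hsub : S ×ˢ T ⊆ {p : X × X | ¬ r p.2 p.1} := by
    rintro ⟨a, b⟩ ⟨ha, hb⟩
    exact hdisj a ha b hb
  obtain ⟨U₀, V₀, hU₀, hV₀, hSU₀, hTV₀, hUV₀⟩ :=
    generalized_tube_lemma hS hT hN hsub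
  obtain ⟨U, hUo, hUdec, hSU, hUU₀⟩ := shrinkDn hG hrefl htrans hK hSK hSdec hU₀ hSU₀
  have hG' : IsClosed {p : X × X | (fun a b => r b a) p.1 p.2} :=
    hG.preimage (continuous_snd.prodMk continuous_fst)
  obtain ⟨V, hVo, hVinc, hTV, hVV₀⟩ :=
    shrinkDn (r := fun a b => r b a) hG' (fun x => hrefl x)
      (fun hab hbc => htrans hbc hab) hK hTK hTinc hV₀ hTV₀
  refine ⟨U, V, hUo, hUdec, hVo, hVinc, hSU, hTV, ?_⟩
  ext z
  simp only [Set.mem_inter_iff, Set.mem_empty_iff_false, iff_false, not_and]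
  intro hzU hzV
  exact hUV₀ (Set.mk_mem_prod (hUU₀ hzU) (hVV₀ hzV)) (hrefl z)

end Toolkit

section Step

variable {E : Type*} [TopologicalSpace E] [Preorder E]

private def r2 (E : Type*) [Preorder E] : (E × E) → (E × E) → Prop :=
  fun a b => a.1 ≤ b.1 ∧ b.2 ≤ a.2

lemma r2_closed (hG : IsClosed {p : E × E | p.1 ≤ p.2}) :
    IsClosed {p : (E × E) × (E × E) | r2 E p.1 p.2} := by
  have h1 : IsClosed {p : (E × E) × (E × E) | p.1.1 ≤ p.2.1} :=
    hG.preimage ((continuous_fst.comp continuous_fst).prodMk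
      (continuous_fst.comp continuous_snd))
  have h2 : IsClosed {p : (E × E) × (E × E) | p.2.2 ≤ p.1.2} :=
    hG.preimage ((continuous_snd.comp continuous_snd).prodMk
      (continuous_snd.comp continuous_fst))
  exact h1.inter h2

omit [TopologicalSpace E] in
lemma r2_trans {a b c : E × E} (h1 : r2 E a b) (h2 : r2 E b c) : r2 E a c :=
  ⟨le_trans h1.1 h2.1, le_trans h2.2 h1.2⟩

lemma stepLemma (hG : IsClosed {p : E × E | p.1 ≤ p.2})
    {K S T C : Set E} (hK : IsCompact K) (hS : IsCompact S) (hT : IsCompact T)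
    (hSK : S ⊆ K) (hTK : T ⊆ K)
    (hSdec : rDecIn (· ≤ ·) K S) (hTinc : rDecIn (fun a b => b ≤ a) K T)
    (hCo : IsOpen C) (hCc : ∀ a ∈ C, ∀ b ∈ C, ∀ z, b ≤ z → z ≤ a → z ∈ C)
    (hST : ∀ p ∈ S, ∀ q ∈ T, ∀ z, q ≤ z → z ≤ p → z ∈ C) :
    ∃ U V, relOpenIn K U ∧ rDecIn (· ≤ ·) K U ∧ relOpenIn K V ∧
      rDecIn (fun a b => b ≤ a) K V ∧ S ⊆ U ∧ T ⊆ V ∧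
      ∀ p ∈ closure U ∩ K, ∀ q ∈ closure V ∩ K, ∀ z, q ≤ z → z ≤ p → z ∈ C := by
  have hG2 := r2_closed (E := E) hG
  have hrefl2 : ∀ x : E × E, r2 E x x := fun x => ⟨le_refl _, le_refl _⟩
  set K2 : Set (E × E) := K ×ˢ K with hK2def
  have hK2 : IsCompact K2 := hK.prod hK
  set R : Set (E × E) := K2 ∩ {w : E × E | ∃ z, z ∉ C ∧ w.2 ≤ z ∧ z ≤ w.1} with hRdef
  have hR' : IsCompact (closure R ∩ K2) := hK2.inter_left isClosed_closure
  set Rhat : Set (E × E) := rHullUp (r2 E) (closure R ∩ K2) ∩ K2 with hRhatdef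
  have hRhatCpt : IsCompact Rhat := hK2.inter_left (isClosed_rHullUp hG2 hR')
  have hDcl : IsClosed {w : E × E | w.2 ≤ w.1} :=
    hG.preimage (continuous_snd.prodMk continuous_fst)
  have hclR_le : closure R ⊆ {w : E × E | w.2 ≤ w.1} := by
    refine closure_minimal ?_ hDcl
    rintro w ⟨-, z, -, hz1, hz2⟩
    exact le_trans hz1 hz2
  -- key disjointness
  have hdisj : ∀ s2 ∈ S ×ˢ T, ∀ t2 ∈ Rhat, ¬ r2 E t2 s2 := by
    rintro ⟨s, t⟩ ⟨hs, ht⟩ ⟨p, q⟩ ⟨⟨w, hwR', hw_le⟩, hpqK2⟩ hle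
    have hw2 : r2 E w (s, t) := r2_trans hw_le hle
    have hD : w.2 ≤ w.1 := hclR_le hwR'.1
    have hw1K : w.1 ∈ K := hwR'.2.1
    have hw2K : w.2 ∈ K := hwR'.2.2
    have hw1S : w.1 ∈ S := hSdec hw1K hs hw2.1
    have hw2T : w.2 ∈ T := hTinc hw2K ht hw2.2
    have w1C : w.1 ∈ C := hST w.1 hw1S w.2 hw2T w.1 hD (le_refl _)
    have w2C : w.2 ∈ C := hST w.1 hw1S w.2 hw2T w.2 (le_refl _) hD
    obtain ⟨v, hvCC, hvR⟩ := mem_closure_iff.1 hwR'.1 (C ×ˢ C) (hCo.prod hCo)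
      (Set.mk_mem_prod w1C w2C)
    obtain ⟨z0, hz0C, hz0a, hz0b⟩ := hvR.2
    exact hz0C (hCc v.1 hvCC.1 v.2 hvCC.2 z0 hz0a hz0b)
  -- separation in the pair space
  obtain ⟨W1, W2, hW1o, hW1dec, hW2o, hW2inc, hSW1, hRW2, hW12⟩ :=
    relNachbin hG2 hrefl2 (fun h1 h2 => r2_trans h1 h2) hK2 (hS.prod hT) hRhatCpt
      (Set.prod_mono hSK hTK) Set.inter_subset_right
      (by rintro ⟨a, b⟩ ⟨c, d⟩ hz ⟨hc, hd⟩ ⟨h1, h2⟩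
          exact ⟨hSdec hz.1 hc h1, hTinc hz.2 hd h2⟩)
      (by rintro ⟨a, b⟩ ⟨c, d⟩ hz ⟨⟨w, hw, hwu⟩, -⟩ hr
          exact ⟨⟨w, hw, r2_trans hwu hr⟩, hz⟩)
      hdisj
  obtain ⟨O1, hO1, hW1eq⟩ := hW1o
  obtain ⟨O2, hO2, hW2eq⟩ := hW2o
  -- tube lemma
  have hSTO1 : S ×ˢ T ⊆ O1 := fun w hw => by
    have := hSW1 hw; rw [hW1eq] at this; exact this.1
  obtain ⟨U₀, V₀, hU₀, hV₀, hSU₀, hTV₀, htube⟩ :=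
    generalized_tube_lemma hS hT hO1 hSTO1
  -- shrink
  obtain ⟨U, hUo, hUdec, hSU, hUU₀⟩ :=
    shrinkDn (r := (· ≤ ·)) hG (fun x => le_refl x) (fun h1 h2 => le_trans h1 h2)
      hK hSK hSdec hU₀ hSU₀
  have hG' : IsClosed {p : E × E | (fun a b => b ≤ a) p.1 p.2} :=
    hG.preimage (continuous_snd.prodMk continuous_fst)
  obtain ⟨V, hVo, hVinc, hTV, hVV₀⟩ :=
    shrinkDn (r := fun a b => b ≤ a) hG' (fun x => le_refl x)
      (fun h1 h2 => le_trans h2 h1) hK hTK hTinc hV₀ hTV₀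
  refine ⟨U, V, hUo, hUdec, hVo, hVinc, hSU, hTV, ?_⟩
  rintro p ⟨hpcl, hpK⟩ q ⟨hqcl, hqK⟩ z hqz hzp
  by_contra hzC
  have hpqR : (p, q) ∈ R := ⟨⟨hpK, hqK⟩, z, hzC, hqz, hzp⟩
  have hpqRhat : (p, q) ∈ Rhat :=
    ⟨⟨(p, q), ⟨subset_closure hpqR, ⟨hpK, hqK⟩⟩, hrefl2 _⟩, hpK, hqK⟩
  have hpqO2 : (p, q) ∈ O2 := by
    have := hRW2 hpqRhat; rw [hW2eq] at this; exact this.1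
  have hpqcl : (p, q) ∈ closure (U ×ˢ V) := by
    rw [closure_prod_eq]; exact Set.mk_mem_prod hpcl hqcl
  obtain ⟨v, hvO2, hvUV⟩ := mem_closure_iff.1 hpqcl O2 hO2 hpqO2
  have hvW1 : v ∈ W1 := by
    rw [hW1eq]
    exact ⟨htube (Set.mk_mem_prod (hUU₀ hvUV.1) (hVV₀ hvUV.2)),
      hUo.subset hvUV.1, hVo.subset hvUV.2⟩
  have hvW2 : v ∈ W2 := by
    rw [hW2eq]
    exact ⟨hvO2, hUo.subset hvUV.1, hVo.subset hvUV.2⟩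
  have hmem : v ∈ W1 ∩ W2 := ⟨hvW1, hvW2⟩
  rw [hW12] at hmem
  exact hmem

end Step

section Masters

variable {E : Type*} [TopologicalSpace E] [Preorder E]

lemma isClosed_decHull_cpt (hG : IsClosed {p : E × E | p.1 ≤ p.2}) {P : Set E}
    (hP : IsCompact P) : IsClosed (decHull P) := by
  have hG' : IsClosed {p : E × E | (fun x y => x ≥ y) p.1 p.2} :=
    hG.preimage (continuous_snd.prodMk continuous_fst)
  have : decHull P = rHullUp (fun x y => x ≥ y) P := by
    ext y; constructor
    · rintro ⟨w, hw, h⟩; exact ⟨w, hw, h⟩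
    · rintro ⟨w, hw, h⟩; exact ⟨w, hw, h⟩
  rw [this]
  exact isClosed_rHullUp hG' hP

lemma isClosed_incHull_cpt (hG : IsClosed {p : E × E | p.1 ≤ p.2}) {P : Set E}
    (hP : IsCompact P) : IsClosed (incHull P) := by
  have : incHull P = rHullUp (· ≤ ·) P := rfl
  rw [this]
  exact isClosed_rHullUp hG hP

omit [TopologicalSpace E] [Preorder E] in
lemma mono_of_succ {U : ℕ → Set E} (h : ∀ n, U n ⊆ U (n + 1)) :
    ∀ {a b : ℕ}, a ≤ b → U a ⊆ U b := by
  intro a b hab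
  induction b, hab using Nat.le_induction with
  | base => exact subset_rfl
  | succ n hn ih => exact ih.trans (h n)

lemma isOpen_iUnion_rel {K : ℕ → Set E}
    (hKm : ∀ {a b : ℕ}, a ≤ b → K a ⊆ K b)
    (hcrit : ∀ O : Set E, (∀ n, IsOpen {y : K n | (y : E) ∈ O}) → IsOpen O)
    (c : ℕ) {U : ℕ → Set E} (hmono : ∀ {a b : ℕ}, a ≤ b → U a ⊆ U b)
    (hrel : ∀ n, relOpenIn (K (c + n)) (U n)) : IsOpen (⋃ n, U n) := by
  choose O hO hUeq using hrel
  apply hcrit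
  intro i
  have key : {y : K i | (y : E) ∈ ⋃ n, U n} =
      ⋃ m, (Subtype.val ⁻¹' (O (m + i)) : Set (K i)) := by
    ext y
    simp only [Set.mem_setOf_eq, Set.mem_iUnion, Set.mem_preimage]
    constructor
    · rintro ⟨j, hj⟩
      refine ⟨j, ?_⟩
      have : (y : E) ∈ U (j + i) := hmono (Nat.le_add_right j i) hj
      rw [hUeq (j + i)] at this
      exact this.1
    · rintro ⟨m, hm⟩
      refine ⟨m + i, ?_⟩
      rw [hUeq (m + i)]
      exact ⟨hm, hKm (by omega : i ≤ c + (m + i)) y.2⟩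
  rw [key]
  exact isOpen_iUnion fun m => (hO (m + i)).preimage continuous_subtype_val

omit [TopologicalSpace E] in
lemma decHull_iUnion_eq {K : ℕ → Set E}
    (hKm : ∀ {a b : ℕ}, a ≤ b → K a ⊆ K b) (hcov : (⋃ n, K n) = Set.univ)
    (c : ℕ) {U : ℕ → Set E} (hmono : ∀ {a b : ℕ}, a ≤ b → U a ⊆ U b)
    (hsub : ∀ n, U n ⊆ K (c + n)) (hdec : ∀ n, rDecIn (· ≤ ·) (K (c + n)) (U n)) :
    decHull (⋃ n, U n) = ⋃ n, U n := by
  apply Set.Subset.antisymm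
  · rintro z ⟨u, hu, hzu⟩
    obtain ⟨n, hn⟩ := Set.mem_iUnion.1 hu
    have hz : z ∈ Set.univ := Set.mem_univ z
    rw [← hcov] at hz
    obtain ⟨m, hm⟩ := Set.mem_iUnion.1 hz
    set k := max n m with hk
    have hzK : z ∈ K (c + k) := hKm (by omega : m ≤ c + k) hm
    have huU : u ∈ U k := hmono (le_max_left n m) hn
    exact Set.mem_iUnion.2 ⟨k, hdec k hzK huU hzu⟩
  · intro z hz
    obtain ⟨n, hn⟩ := Set.mem_iUnion.1 hz
    exact ⟨z, Set.mem_iUnion.2 ⟨n, hn⟩, le_refl z⟩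

omit [TopologicalSpace E] in
lemma incHull_iUnion_eq {K : ℕ → Set E}
    (hKm : ∀ {a b : ℕ}, a ≤ b → K a ⊆ K b) (hcov : (⋃ n, K n) = Set.univ)
    (c : ℕ) {U : ℕ → Set E} (hmono : ∀ {a b : ℕ}, a ≤ b → U a ⊆ U b)
    (hsub : ∀ n, U n ⊆ K (c + n))
    (hinc : ∀ n, rDecIn (fun a b => b ≤ a) (K (c + n)) (U n)) :
    incHull (⋃ n, U n) = ⋃ n, U n := by
  apply Set.Subset.antisymm
  · rintro z ⟨u, hu, hzu⟩
    obtain ⟨n, hn⟩ := Set.mem_iUnion.1 hu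
    have hz : z ∈ Set.univ := Set.mem_univ z
    rw [← hcov] at hz
    obtain ⟨m, hm⟩ := Set.mem_iUnion.1 hz
    set k := max n m with hk
    have hzK : z ∈ K (c + k) := hKm (by omega : m ≤ c + k) hm
    have huU : u ∈ U k := hmono (le_max_left n m) hn
    exact Set.mem_iUnion.2 ⟨k, hinc k hzK huU hzu⟩
  · intro z hz
    obtain ⟨n, hn⟩ := Set.mem_iUnion.1 hz
    exact ⟨z, Set.mem_iUnion.2 ⟨n, hn⟩, le_refl z⟩

lemma exists_chain {α : Type*} (P : ℕ → α → Prop) (L : α → α → Prop)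
    (base : ∃ a, P 0 a) (step : ∀ n a, P n a → ∃ b, P (n + 1) b ∧ L a b) :
    ∃ f : ℕ → α, (∀ n, P n (f n)) ∧ ∀ n, L (f n) (f (n + 1)) := by
  choose F hF1 hF2 using step
  let g : ∀ n : ℕ, {a : α // P n a} := fun n =>
    Nat.rec ⟨base.choose, base.choose_spec⟩
      (fun n p => ⟨F n p.1 p.2, hF1 n p.1 p.2⟩) n
  exact ⟨fun n => (g n).1, fun n => (g n).2, fun n => hF2 n (g n).1 (g n).2⟩

lemma buildNextC (hG : IsClosed {p : E × E | p.1 ≤ p.2})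
    {K : Set E} (hK : IsCompact K) {C : Set E} (hCo : IsOpen C)
    (hCc : ∀ a ∈ C, ∀ b ∈ C, ∀ z, b ≤ z → z ≤ a → z ∈ C)
    {P Q : Set E} (hP : IsCompact P) (hQ : IsCompact Q)
    (hinv : ∀ z p q, p ∈ P → q ∈ Q → q ≤ z → z ≤ p → z ∈ C) :
    ∃ U V, relOpenIn K U ∧ rDecIn (· ≤ ·) K U ∧ relOpenIn K V ∧
      rDecIn (fun a b => b ≤ a) K V ∧
      decHull P ∩ K ⊆ U ∧ incHull Q ∩ K ⊆ V ∧
      ∀ p ∈ closure U ∩ K, ∀ q ∈ closure V ∩ K, ∀ z, q ≤ z → z ≤ p → z ∈ C := by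
  have hdP : IsClosed (decHull P) := isClosed_decHull_cpt hG hP
  have hiQ : IsClosed (incHull Q) := isClosed_incHull_cpt hG hQ
  have hS : IsCompact (decHull P ∩ K) := hK.inter_left hdP
  have hT : IsCompact (incHull Q ∩ K) := hK.inter_left hiQ
  have hSdec : rDecIn (· ≤ ·) K (decHull P ∩ K) := by
    rintro z u hz ⟨⟨p', hp', hup'⟩, -⟩ hzu
    exact ⟨⟨p', hp', le_trans hzu hup'⟩, hz⟩
  have hTinc : rDecIn (fun a b => b ≤ a) K (incHull Q ∩ K) := by
    rintro z u hz ⟨⟨q', hq', hq'u⟩, -⟩ huz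
    exact ⟨⟨q', hq', le_trans hq'u huz⟩, hz⟩
  have hST : ∀ p ∈ decHull P ∩ K, ∀ q ∈ incHull Q ∩ K,
      ∀ z, q ≤ z → z ≤ p → z ∈ C := by
    rintro p ⟨⟨p', hp', hpp'⟩, -⟩ q ⟨⟨q', hq', hq'q⟩, -⟩ z hqz hzp
    exact hinv z p' q' hp' hq' (le_trans hq'q hqz) (le_trans hzp hpp')
  exact stepLemma hG hK hS hT Set.inter_subset_right Set.inter_subset_right
    hSdec hTinc hCo hCc hST

lemma buildNextN (hG : IsClosed {p : E × E | p.1 ≤ p.2})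
    {K : Set E} (hK : IsCompact K)
    {A B : Set E} (hA : IsClosed A) (hAd : ∀ z p, p ∈ A → z ≤ p → z ∈ A)
    (hB : IsClosed B) (hBi : ∀ z q, q ∈ B → q ≤ z → z ∈ B)
    {P Q : Set E} (hP : IsCompact P) (hQ : IsCompact Q)
    (hinv : ∀ p q, p ∈ A ∪ P → q ∈ B ∪ Q → ¬ q ≤ p) :
    ∃ U V, relOpenIn K U ∧ rDecIn (· ≤ ·) K U ∧ relOpenIn K V ∧
      rDecIn (fun a b => b ≤ a) K V ∧
      (A ∪ decHull P) ∩ K ⊆ U ∧ (B ∪ incHull Q) ∩ K ⊆ V ∧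
      ∀ p q, p ∈ A ∪ (closure U ∩ K) → q ∈ B ∪ (closure V ∩ K) → ¬ q ≤ p := by
  have hdP : IsClosed (decHull P) := isClosed_decHull_cpt hG hP
  have hiQ : IsClosed (incHull Q) := isClosed_incHull_cpt hG hQ
  set S : Set E := (A ∪ decHull P) ∩ K with hSdef
  set T : Set E := (B ∪ incHull Q) ∩ K with hTdef
  have hScpt : IsCompact S := hK.inter_left (hA.union hdP)
  have hTcpt : IsCompact T := hK.inter_left (hB.union hiQ)
  have hSdec : rDecIn (· ≤ ·) K S := by
    rintro z u hz ⟨hu, -⟩ hzu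
    rcases hu with hu | ⟨p', hp', hup'⟩
    · exact ⟨Or.inl (hAd z u hu hzu), hz⟩
    · exact ⟨Or.inr ⟨p', hp', le_trans hzu hup'⟩, hz⟩
  have hTinc : rDecIn (fun a b => b ≤ a) K T := by
    rintro z u hz ⟨hu, -⟩ huz
    rcases hu with hu | ⟨q', hq', hq'u⟩
    · exact ⟨Or.inl (hBi z u hu huz), hz⟩
    · exact ⟨Or.inr ⟨q', hq', le_trans hq'u huz⟩, hz⟩
  -- larger elements in A ∪ P, smaller in B ∪ Q
  have hSup : ∀ p ∈ S, ∃ p' ∈ A ∪ P, p ≤ p' := by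
    rintro p ⟨hp | ⟨p', hp', hpp'⟩, -⟩
    · exact ⟨p, Or.inl hp, le_refl p⟩
    · exact ⟨p', Or.inr hp', hpp'⟩
  have hTdn : ∀ q ∈ T, ∃ q' ∈ B ∪ Q, q' ≤ q := by
    rintro q ⟨hq | ⟨q', hq', hq'q⟩, -⟩
    · exact ⟨q, Or.inl hq, le_refl q⟩
    · exact ⟨q', Or.inr hq', hq'q⟩
  have hST : ∀ p ∈ S, ∀ q ∈ T, ∀ z, q ≤ z → z ≤ p → z ∈ (∅ : Set E) := by
    intro p hp q hq z hqz hzp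
    obtain ⟨p', hp', hpp'⟩ := hSup p hp
    obtain ⟨q', hq', hq'q⟩ := hTdn q hq
    exact absurd (le_trans (le_trans hq'q hqz) (le_trans hzp hpp'))
      (hinv p' q' hp' hq')
  obtain ⟨U'', V'', hU''o, hU''dec, hV''o, hV''inc, hSU'', hTV'', hmain⟩ :=
    stepLemma hG hK hScpt hTcpt Set.inter_subset_right Set.inter_subset_right
      hSdec hTinc isOpen_empty (fun a ha => absurd ha (Set.notMem_empty a)) hST
  -- extra separation 1 : A ∩ K  vs  T
  have hAK : IsCompact (A ∩ K) := hK.inter_left hA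
  have hAKdec : rDecIn (· ≤ ·) K (A ∩ K) :=
    fun z u hz hu hzu => ⟨hAd z u hu.1 hzu, hz⟩
  obtain ⟨W3, W4, hW3o, hW3dec, hW4o, hW4inc, hAW3, hTW4, hW34⟩ :=
    relNachbin (r := (· ≤ ·)) hG (fun x => le_refl x)
      (fun h1 h2 => le_trans h1 h2) hK hAK hTcpt Set.inter_subset_right
      Set.inter_subset_right hAKdec hTinc
      (by rintro s hs t ht hts
          obtain ⟨q', hq', hq'tq⟩ := hTdn t ht
          exact hinv s q' (Or.inl hs.1) hq' (le_trans hq'tq hts))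
  -- extra separation 2 : S  vs  B ∩ K
  have hBK : IsCompact (B ∩ K) := hK.inter_left hB
  have hBKinc : rDecIn (fun a b => b ≤ a) K (B ∩ K) :=
    fun z u hz hu huz => ⟨hBi z u hu.1 huz, hz⟩
  obtain ⟨W5, W6, hW5o, hW5dec, hW6o, hW6inc, hSW5, hBW6, hW56⟩ :=
    relNachbin (r := (· ≤ ·)) hG (fun x => le_refl x)
      (fun h1 h2 => le_trans h1 h2) hK hScpt hBK Set.inter_subset_right
      Set.inter_subset_right hSdec hBKinc
      (by rintro s hs t ht hts
          obtain ⟨p', hp', hsp'⟩ := hSup s hs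
          exact hinv p' t hp' (Or.inl ht.1) (le_trans hts hsp'))
  obtain ⟨O3, hO3, hW3eq⟩ := hW3o
  obtain ⟨O6, hO6, hW6eq⟩ := hW6o
  refine ⟨U'' ∩ W5, V'' ∩ W4, hU''o.inter hW5o, hU''dec.inter hW5dec,
    hV''o.inter hW4o, hV''inc.inter hW4inc,
    fun s hs => ⟨hSU'' hs, hSW5 hs⟩, fun t ht => ⟨hTV'' ht, hTW4 ht⟩, ?_⟩
  rintro p q hp hq hqp
  rcases hp with hpA | ⟨hpcl, hpK⟩
  · rcases hq with hqB | ⟨hqcl, hqK⟩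
    · exact hinv p q (Or.inl hpA) (Or.inl hqB) hqp
    · -- q ≤ p ∈ A, q ∈ closure (V'' ∩ W4) ∩ K
      have hqA : q ∈ A := hAd q p hpA hqp
      have hqW3 : q ∈ O3 := by
        have : q ∈ W3 := hAW3 ⟨hqA, hqK⟩
        rw [hW3eq] at this; exact this.1
      obtain ⟨v, hvO3, hvV⟩ := mem_closure_iff.1 hqcl O3 hO3 hqW3
      have hvW3 : v ∈ W3 := by
        rw [hW3eq]
        exact ⟨hvO3, hW4o.subset hvV.2⟩
      have : v ∈ W3 ∩ W4 := ⟨hvW3, hvV.2⟩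
      rw [hW34] at this; exact this
  · rcases hq with hqB | ⟨hqcl, hqK⟩
    · have hpB : p ∈ B := hBi p q hqB hqp
      have hpW6 : p ∈ O6 := by
        have : p ∈ W6 := hBW6 ⟨hpB, hpK⟩
        rw [hW6eq] at this; exact this.1
      obtain ⟨v, hvO6, hvU⟩ := mem_closure_iff.1 hpcl O6 hO6 hpW6
      have hvW6 : v ∈ W6 := by
        rw [hW6eq]
        exact ⟨hvO6, hW5o.subset hvU.2⟩
      have : v ∈ W5 ∩ W6 := ⟨hvU.2, hvW6⟩
      rw [hW56] at this; exact this
    · have h1 : p ∈ closure U'' ∩ K :=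
        ⟨closure_mono Set.inter_subset_left hpcl, hpK⟩
      have h2 : q ∈ closure V'' ∩ K :=
        ⟨closure_mono Set.inter_subset_left hqcl, hqK⟩
      exact hmain p h1 q h2 p hqp (le_refl p)

lemma normalMaster (hG : IsClosed {p : E × E | p.1 ≤ p.2}) (hkw : IsKOmegaSpace E)
    {A B : Set E} (hA : IsClosed A) (hAd : ∀ z p, p ∈ A → z ≤ p → z ∈ A)
    (hB : IsClosed B) (hBi : ∀ z q, q ∈ B → q ≤ z → z ∈ B) (hAB : A ∩ B = ∅) :
    ∃ U V : Set E, IsOpen U ∧ decHull U = U ∧ IsOpen V ∧ incHull V = V ∧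
      A ⊆ U ∧ B ⊆ V ∧ U ∩ V = ∅ := by
  obtain ⟨K, hKc, hKsucc, hcov, hcrit⟩ := hkw
  have hKm : ∀ {a b : ℕ}, a ≤ b → K a ⊆ K b := mono_of_succ hKsucc
  have hbase : ∀ p q, p ∈ A ∪ (∅ : Set E) → q ∈ B ∪ (∅ : Set E) → ¬ q ≤ p := by
    rintro p q (hp | h) (hq | h) hqp
    · have : p ∈ A ∩ B := ⟨hp, hBi p q hq hqp⟩
      rw [hAB] at this; exact this
    · exact h
    · exact h
    · exact h
  set SP : ℕ → Set E × Set E → Prop := fun n s =>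
    relOpenIn (K n) s.1 ∧ rDecIn (· ≤ ·) (K n) s.1 ∧ relOpenIn (K n) s.2 ∧
    rDecIn (fun a b => b ≤ a) (K n) s.2 ∧ A ∩ K n ⊆ s.1 ∧ B ∩ K n ⊆ s.2 ∧
    (∀ p q, p ∈ A ∪ (closure s.1 ∩ K n) → q ∈ B ∪ (closure s.2 ∩ K n) → ¬ q ≤ p)
    with hSPdef
  have base : ∃ s, SP 0 s := by
    obtain ⟨U, V, h1, h2, h3, h4, h5, h6, h7⟩ :=
      buildNextN hG (hKc 0) hA hAd hB hBi isCompact_empty isCompact_empty hbase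
    exact ⟨(U, V), h1, h2, h3, h4,
      fun a ha => h5 ⟨Or.inl ha.1, ha.2⟩,
      fun b hb => h6 ⟨Or.inl hb.1, hb.2⟩, h7⟩
  have step : ∀ n s, SP n s → ∃ s', SP (n + 1) s' ∧ (s.1 ⊆ s'.1 ∧ s.2 ⊆ s'.2) := by
    intro n s hs
    obtain ⟨h1, h2, h3, h4, h5, h6, h7⟩ := hs
    obtain ⟨U, V, g1, g2, g3, g4, g5, g6, g7⟩ :=
      buildNextN hG (hKc (n + 1)) hA hAd hB hBi
        ((hKc n).inter_left isClosed_closure)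
        ((hKc n).inter_left isClosed_closure) h7
    refine ⟨(U, V), ⟨g1, g2, g3, g4,
      fun a ha => g5 ⟨Or.inl ha.1, ha.2⟩,
      fun b hb => g6 ⟨Or.inl hb.1, hb.2⟩, g7⟩, ?_, ?_⟩
    · intro u hu
      exact g5 ⟨Or.inr ⟨u, ⟨subset_closure hu, h1.subset hu⟩, le_refl u⟩,
        hKsucc n (h1.subset hu)⟩
    · intro u hu
      exact g6 ⟨Or.inr ⟨u, ⟨subset_closure hu, h3.subset hu⟩, le_refl u⟩,
        hKsucc n (h3.subset hu)⟩
  obtain ⟨f, hf, hlink⟩ := exists_chain SP _ base step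
  have hm1 : ∀ {a b : ℕ}, a ≤ b → (f a).1 ⊆ (f b).1 :=
    mono_of_succ (fun n => (hlink n).1)
  have hm2 : ∀ {a b : ℕ}, a ≤ b → (f a).2 ⊆ (f b).2 :=
    mono_of_succ (fun n => (hlink n).2)
  refine ⟨⋃ n, (f n).1, ⋃ n, (f n).2, ?_, ?_, ?_, ?_, ?_, ?_, ?_⟩
  · exact isOpen_iUnion_rel hKm (fun O h => (hcrit O).2 h) 0 hm1
      (fun n => by rw [Nat.zero_add]; exact (hf n).1)
  · exact decHull_iUnion_eq hKm hcov 0 hm1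
      (fun n => by rw [Nat.zero_add]; exact (hf n).1.subset)
      (fun n => by rw [Nat.zero_add]; exact (hf n).2.1)
  · exact isOpen_iUnion_rel hKm (fun O h => (hcrit O).2 h) 0 hm2
      (fun n => by rw [Nat.zero_add]; exact (hf n).2.2.1)
  · exact incHull_iUnion_eq hKm hcov 0 hm2
      (fun n => by rw [Nat.zero_add]; exact (hf n).2.2.1.subset)
      (fun n => by rw [Nat.zero_add]; exact (hf n).2.2.2.1)
  · intro a ha
    have : a ∈ Set.univ := Set.mem_univ a
    rw [← hcov] at this
    obtain ⟨n, hn⟩ := Set.mem_iUnion.1 this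
    exact Set.mem_iUnion.2 ⟨n, (hf n).2.2.2.2.1 ⟨ha, hn⟩⟩
  · intro b hb
    have : b ∈ Set.univ := Set.mem_univ b
    rw [← hcov] at this
    obtain ⟨n, hn⟩ := Set.mem_iUnion.1 this
    exact Set.mem_iUnion.2 ⟨n, (hf n).2.2.2.2.2.1 ⟨hb, hn⟩⟩
  · ext z
    simp only [Set.mem_inter_iff, Set.mem_iUnion, Set.mem_empty_iff_false,
      iff_false, not_and]
    rintro ⟨n, hn⟩ ⟨m, hm⟩
    set k := max n m with hk
    have hz1 : z ∈ (f k).1 := hm1 (le_max_left n m) hn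
    have hz2 : z ∈ (f k).2 := hm2 (le_max_right n m) hm
    exact (hf k).2.2.2.2.2.2 z z
      (Or.inr ⟨subset_closure hz1, (hf k).1.subset hz1⟩)
      (Or.inr ⟨subset_closure hz2, (hf k).2.2.1.subset hz2⟩) (le_refl z)

lemma convexMaster (hG : IsClosed {p : E × E | p.1 ≤ p.2}) (hkw : IsKOmegaSpace E)
    {C : Set E} (hCo : IsOpen C)
    (hCc : ∀ a ∈ C, ∀ b ∈ C, ∀ z, b ≤ z → z ≤ a → z ∈ C) {x : E} (hxC : x ∈ C) :
    ∃ U V : Set E, IsOpen U ∧ decHull U = U ∧ IsOpen V ∧ incHull V = V ∧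
      x ∈ U ∩ V ∧ U ∩ V ⊆ C := by
  obtain ⟨K, hKc, hKsucc, hcov, hcrit⟩ := hkw
  have hKm : ∀ {a b : ℕ}, a ≤ b → K a ⊆ K b := mono_of_succ hKsucc
  have hxu : x ∈ Set.univ := Set.mem_univ x
  rw [← hcov] at hxu
  obtain ⟨n₀, hx0⟩ := Set.mem_iUnion.1 hxu
  set SP : ℕ → Set E × Set E → Prop := fun m s =>
    relOpenIn (K (n₀ + m)) s.1 ∧ rDecIn (· ≤ ·) (K (n₀ + m)) s.1 ∧
    relOpenIn (K (n₀ + m)) s.2 ∧ rDecIn (fun a b => b ≤ a) (K (n₀ + m)) s.2 ∧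
    x ∈ s.1 ∧ x ∈ s.2 ∧
    (∀ p ∈ closure s.1 ∩ K (n₀ + m), ∀ q ∈ closure s.2 ∩ K (n₀ + m),
      ∀ z, q ≤ z → z ≤ p → z ∈ C) with hSPdef
  have base : ∃ s, SP 0 s := by
    obtain ⟨U, V, h1, h2, h3, h4, h5, h6, h7⟩ :=
      buildNextC hG (hKc (n₀ + 0)) hCo hCc
        (isCompact_singleton : IsCompact ({x} : Set E)) (isCompact_singleton : IsCompact ({x} : Set E))
        (by intro z p q hp hq hqz hzp
            rw [Set.eq_of_mem_singleton hp] at hzp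
            rw [Set.eq_of_mem_singleton hq] at hqz
            exact hCc x hxC x hxC z hqz hzp)
    have hxK : x ∈ K (n₀ + 0) := hKm (Nat.le_add_right n₀ 0) hx0
    exact ⟨(U, V), h1, h2, h3, h4,
      h5 ⟨⟨x, rfl, le_refl x⟩, hxK⟩, h6 ⟨⟨x, rfl, le_refl x⟩, hxK⟩, h7⟩
  have step : ∀ m s, SP m s → ∃ s', SP (m + 1) s' ∧ (s.1 ⊆ s'.1 ∧ s.2 ⊆ s'.2) := by
    intro m s hs
    obtain ⟨h1, h2, h3, h4, h5, h6, h7⟩ := hs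
    obtain ⟨U, V, g1, g2, g3, g4, g5, g6, g7⟩ :=
      buildNextC hG (hKc (n₀ + (m + 1))) hCo hCc
        ((hKc (n₀ + m)).inter_left isClosed_closure)
        ((hKc (n₀ + m)).inter_left isClosed_closure)
        (fun z p q hp hq hqz hzp => h7 p hp q hq z hqz hzp)
    have hxP : x ∈ closure s.1 ∩ K (n₀ + m) := ⟨subset_closure h5, h1.subset h5⟩
    have hxQ : x ∈ closure s.2 ∩ K (n₀ + m) := ⟨subset_closure h6, h3.subset h6⟩
    have hKstep : K (n₀ + m) ⊆ K (n₀ + (m + 1)) := hKm (by omega)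
    refine ⟨(U, V), ⟨g1, g2, g3, g4,
      g5 ⟨⟨x, hxP, le_refl x⟩, hKstep hxP.2⟩,
      g6 ⟨⟨x, hxQ, le_refl x⟩, hKstep hxQ.2⟩, g7⟩, ?_, ?_⟩
    · intro u hu
      exact g5 ⟨⟨u, ⟨subset_closure hu, h1.subset hu⟩, le_refl u⟩,
        hKstep (h1.subset hu)⟩
    · intro u hu
      exact g6 ⟨⟨u, ⟨subset_closure hu, h3.subset hu⟩, le_refl u⟩,
        hKstep (h3.subset hu)⟩
  obtain ⟨f, hf, hlink⟩ := exists_chain SP _ base step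
  have hm1 : ∀ {a b : ℕ}, a ≤ b → (f a).1 ⊆ (f b).1 :=
    mono_of_succ (fun n => (hlink n).1)
  have hm2 : ∀ {a b : ℕ}, a ≤ b → (f a).2 ⊆ (f b).2 :=
    mono_of_succ (fun n => (hlink n).2)
  refine ⟨⋃ n, (f n).1, ⋃ n, (f n).2, ?_, ?_, ?_, ?_,
    ⟨Set.mem_iUnion.2 ⟨0, (hf 0).2.2.2.2.1⟩,
     Set.mem_iUnion.2 ⟨0, (hf 0).2.2.2.2.2.1⟩⟩, ?_⟩
  · exact isOpen_iUnion_rel hKm (fun O h => (hcrit O).2 h) n₀ hm1 (fun n => (hf n).1)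
  · exact decHull_iUnion_eq hKm hcov n₀ hm1
      (fun n => (hf n).1.subset) (fun n => (hf n).2.1)
  · exact isOpen_iUnion_rel hKm (fun O h => (hcrit O).2 h) n₀ hm2 (fun n => (hf n).2.2.1)
  · exact incHull_iUnion_eq hKm hcov n₀ hm2
      (fun n => (hf n).2.2.1.subset) (fun n => (hf n).2.2.2.1)
  · rintro z ⟨hz1, hz2⟩
    obtain ⟨n, hn⟩ := Set.mem_iUnion.1 hz1
    obtain ⟨m, hm⟩ := Set.mem_iUnion.1 hz2
    set k := max n m with hk
    have hzk1 : z ∈ (f k).1 := hm1 (le_max_left n m) hn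
    have hzk2 : z ∈ (f k).2 := hm2 (le_max_right n m) hm
    exact (hf k).2.2.2.2.2.2 z ⟨subset_closure hzk1, (hf k).1.subset hzk1⟩
      z ⟨subset_closure hzk2, (hf k).2.2.1.subset hzk2⟩ z (le_refl z) (le_refl z)

end Masters

/-- Every weakly convex closed preordered `k_ω`-space is a convex normally
preordered space. -/
theorem convex_normallyPreordered_of_weaklyConvex {E : Type*} [TopologicalSpace E]
    [Preorder E]
    (hG : IsClosed {p : E × E | p.1 ≤ p.2})
    (hkw : IsKOmegaSpace E)
    (hwc : ∀ x : E, ∀ O ∈ 𝓝 x, ∃ C ∈ 𝓝 x, IsOpen C ∧ IsOrdConvex C ∧ C ⊆ O) :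
    (∀ x : E, ∀ O : Set E, IsOpen O → x ∈ O →
      ∃ U V : Set E, IsOpen U ∧ decHull U = U ∧ IsOpen V ∧ incHull V = V ∧
        x ∈ U ∩ V ∧ U ∩ V ⊆ O) ∧
    (∀ x : E, IsClosed (incHull {x}) ∧ IsClosed (decHull {x})) ∧
    (∀ A B : Set E, IsClosed A → decHull A = A → IsClosed B → incHull B = B →
      A ∩ B = ∅ →
      ∃ U V : Set E, IsOpen U ∧ decHull U = U ∧ IsOpen V ∧ incHull V = V ∧
        A ⊆ U ∧ B ⊆ V ∧ U ∩ V = ∅) := by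
  refine ⟨?_, ?_, ?_⟩
  · intro x O hO hxO
    obtain ⟨C, hCn, hCo, hCconv, hCO⟩ := hwc x O (hO.mem_nhds hxO)
    have hxC : x ∈ C := mem_of_mem_nhds hCn
    have hce : decHull C ∩ incHull C = C := hCconv
    have hCc : ∀ a ∈ C, ∀ b ∈ C, ∀ z, b ≤ z → z ≤ a → z ∈ C := by
      intro a ha b hb z hbz hza
      have hz : z ∈ decHull C ∩ incHull C := ⟨⟨a, ha, hza⟩, ⟨b, hb, hbz⟩⟩
      rw [hce] at hz; exact hz
    obtain ⟨U, V, h1, h2, h3, h4, h5, h6⟩ := convexMaster hG hkw hCo hCc hxC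
    exact ⟨U, V, h1, h2, h3, h4, h5, h6.trans hCO⟩
  · intro x
    constructor
    · have h : incHull ({x} : Set E) =
          (fun y => ((x, y) : E × E)) ⁻¹' {p : E × E | p.1 ≤ p.2} := by
        ext y
        constructor
        · rintro ⟨x', hx', hle⟩
          rw [Set.eq_of_mem_singleton hx'] at hle
          exact hle
        · intro hle
          exact ⟨x, rfl, hle⟩
      rw [h]
      exact hG.preimage (continuous_const.prodMk continuous_id)
    · have h : decHull ({x} : Set E) =
          (fun y => ((y, x) : E × E)) ⁻¹' {p : E × E | p.1 ≤ p.2} := by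
        ext y
        constructor
        · rintro ⟨x', hx', hle⟩
          rw [Set.eq_of_mem_singleton hx'] at hle
          exact hle
        · intro hle
          exact ⟨x, rfl, hle⟩
      rw [h]
      exact hG.preimage (continuous_id.prodMk continuous_const)
  · intro A B hA hAe hB hBe hAB
    refine normalMaster hG hkw hA ?_ hB ?_ hAB
    · intro z p hp hzp
      have hz : z ∈ decHull A := ⟨p, hp, hzp⟩
      rw [hAe] at hz; exact hz
    · intro z q hq hqz
      have hz : z ∈ incHull B := ⟨q, hq, hqz⟩
      rw [hBe] at hz; exact hz
end

section
/- Every locally convex closed preordered space whose topology is locally compact and σ-compact is a convex normally preordered space. -/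
open Topology

set_option linter.unusedSectionVars false

open Set

namespace OrdSepAux


variable {E : Type*} [Preorder E]

theorem subset_incHull (S : Set E) : S ⊆ incHull S := fun y hy => ⟨y, hy, le_rfl⟩
theorem subset_decHull (S : Set E) : S ⊆ decHull S := fun y hy => ⟨y, hy, le_rfl⟩

theorem incHull_mono {S T : Set E} (h : S ⊆ T) : incHull S ⊆ incHull T := by
  rintro y ⟨x, hx, hxy⟩; exact ⟨x, h hx, hxy⟩
theorem decHull_mono {S T : Set E} (h : S ⊆ T) : decHull S ⊆ decHull T := by
  rintro y ⟨x, hx, hxy⟩; exact ⟨x, h hx, hxy⟩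

theorem incHull_idem (S : Set E) : incHull (incHull S) = incHull S := by
  refine subset_antisymm ?_ (subset_incHull _)
  rintro y ⟨x, ⟨w, hw, hwx⟩, hxy⟩; exact ⟨w, hw, hwx.trans hxy⟩
theorem decHull_idem (S : Set E) : decHull (decHull S) = decHull S := by
  refine subset_antisymm ?_ (subset_decHull _)
  rintro y ⟨x, ⟨w, hw, hwx⟩, hxy⟩; exact ⟨w, hw, hxy.trans hwx⟩

theorem incHull_union (S T : Set E) : incHull (S ∪ T) = incHull S ∪ incHull T := by
  ext y
  constructor
  · rintro ⟨x, hx | hx, hxy⟩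
    exacts [Or.inl ⟨x, hx, hxy⟩, Or.inr ⟨x, hx, hxy⟩]
  · rintro (⟨x, hx, hxy⟩ | ⟨x, hx, hxy⟩)
    exacts [⟨x, Or.inl hx, hxy⟩, ⟨x, Or.inr hx, hxy⟩]
theorem decHull_union (S T : Set E) : decHull (S ∪ T) = decHull S ∪ decHull T := by
  ext y
  constructor
  · rintro ⟨x, hx | hx, hxy⟩
    exacts [Or.inl ⟨x, hx, hxy⟩, Or.inr ⟨x, hx, hxy⟩]
  · rintro (⟨x, hx, hxy⟩ | ⟨x, hx, hxy⟩)
    exacts [⟨x, Or.inl hx, hxy⟩, ⟨x, Or.inr hx, hxy⟩]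

theorem incHull_iUnion {ι : Sort*} (S : ι → Set E) :
    incHull (⋃ i, S i) = ⋃ i, incHull (S i) := by
  ext y
  constructor
  · rintro ⟨x, hx, hxy⟩
    obtain ⟨i, hi⟩ := mem_iUnion.mp hx
    exact mem_iUnion.mpr ⟨i, x, hi, hxy⟩
  · intro hy
    obtain ⟨i, x, hx, hxy⟩ := mem_iUnion.mp hy
    exact ⟨x, mem_iUnion.mpr ⟨i, hx⟩, hxy⟩
theorem decHull_iUnion {ι : Sort*} (S : ι → Set E) :
    decHull (⋃ i, S i) = ⋃ i, decHull (S i) := by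
  ext y
  constructor
  · rintro ⟨x, hx, hxy⟩
    obtain ⟨i, hi⟩ := mem_iUnion.mp hx
    exact mem_iUnion.mpr ⟨i, x, hi, hxy⟩
  · intro hy
    obtain ⟨i, x, hx, hxy⟩ := mem_iUnion.mp hy
    exact ⟨x, mem_iUnion.mpr ⟨i, hx⟩, hxy⟩


variable {E : Type*} [TopologicalSpace E] [Preorder E]

/-- Tube: no point of compact `K` lies below `y`. -/
theorem tube_up (hG : IsClosed {p : E × E | p.1 ≤ p.2}) {K : Set E} (hK : IsCompact K)
    {y : E} (h : ∀ k ∈ K, ¬ k ≤ y) :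
    ∃ P W : Set E, IsOpen P ∧ IsOpen W ∧ K ⊆ P ∧ y ∈ W ∧
      ∀ p ∈ P, ∀ w ∈ W, ¬ p ≤ w := by
  have hsub : K ×ˢ ({y} : Set E) ⊆ {p : E × E | p.1 ≤ p.2}ᶜ := by
    rintro ⟨a, b⟩ ⟨ha, hb⟩
    rcases hb with rfl
    exact h a ha
  obtain ⟨u, v, hu, hv, hKu, hyv, huv⟩ :=
    generalized_tube_lemma hK isCompact_singleton hG.isOpen_compl hsub
  exact ⟨u, v, hu, hv, hKu, hyv rfl,
    fun p hp w hw hle => huv (show (p, w) ∈ u ×ˢ v from ⟨hp, hw⟩) hle⟩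

theorem tube_down (hG : IsClosed {p : E × E | p.1 ≤ p.2}) {K : Set E} (hK : IsCompact K)
    {y : E} (h : ∀ k ∈ K, ¬ y ≤ k) :
    ∃ W P : Set E, IsOpen W ∧ IsOpen P ∧ y ∈ W ∧ K ⊆ P ∧
      ∀ w ∈ W, ∀ p ∈ P, ¬ w ≤ p := by
  have hsub : ({y} : Set E) ×ˢ K ⊆ {p : E × E | p.1 ≤ p.2}ᶜ := by
    rintro ⟨a, b⟩ ⟨ha, hb⟩
    rcases ha with rfl
    exact h b hb
  obtain ⟨u, v, hu, hv, hyu, hKv, huv⟩ :=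
    generalized_tube_lemma isCompact_singleton hK hG.isOpen_compl hsub
  exact ⟨u, v, hu, hv, hyu rfl, hKv,
    fun w hw p hp hle => huv (show (w, p) ∈ u ×ˢ v from ⟨hw, hp⟩) hle⟩

theorem isClosed_incHull (hG : IsClosed {p : E × E | p.1 ≤ p.2}) {K : Set E}
    (hK : IsCompact K) : IsClosed (incHull K) := by
  rw [← isOpen_compl_iff, isOpen_iff_mem_nhds]
  intro y hy
  obtain ⟨P, W, hP, hW, hKP, hyW, hrel⟩ :=
    tube_up hG hK (fun k hk hky => hy ⟨k, hk, hky⟩)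
  refine Filter.mem_of_superset (hW.mem_nhds hyW) ?_
  rintro w hw ⟨k, hk, hkw⟩
  exact hrel k (hKP hk) w hw hkw

theorem isClosed_decHull (hG : IsClosed {p : E × E | p.1 ≤ p.2}) {K : Set E}
    (hK : IsCompact K) : IsClosed (decHull K) := by
  rw [← isOpen_compl_iff, isOpen_iff_mem_nhds]
  intro y hy
  obtain ⟨W, P, hW, hP, hyW, hKP, hrel⟩ :=
    tube_down hG hK (fun k hk hky => hy ⟨k, hk, hky⟩)
  refine Filter.mem_of_superset (hW.mem_nhds hyW) ?_
  rintro w hw ⟨k, hk, hwk⟩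
  exact hrel w hw k (hKP hk) hwk

/-- A point lying in the closure of every open superset of a compact set `X`
lies in both hulls of `X`. -/
theorem mem_hulls_of_mem_closures (hG : IsClosed {p : E × E | p.1 ≤ p.2})
    {X : Set E} (hX : IsCompact X) {z : E}
    (h : ∀ U : Set E, IsOpen U → X ⊆ U → z ∈ closure U) :
    z ∈ incHull X ∧ z ∈ decHull X := by
  constructor
  · by_contra hz
    obtain ⟨P, W, hP, hW, hXP, hzW, hrel⟩ :=
      tube_up hG hX (fun k hk hkz => hz ⟨k, hk, hkz⟩)
    obtain ⟨w, hwW, hwP⟩ := mem_closure_iff.mp (h P hP hXP) W hW hzW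
    exact hrel w hwP w hwW le_rfl
  · by_contra hz
    obtain ⟨W, P, hW, hP, hzW, hXP, hrel⟩ :=
      tube_down hG hX (fun k hk hkz => hz ⟨k, hk, hkz⟩)
    obtain ⟨w, hwW, hwP⟩ := mem_closure_iff.mp (h P hP hXP) W hW hzW
    exact hrel w hwW w hwP le_rfl

/-- Elimination: a compact set disjoint from both hulls of `X` can be
separated from the closure of some open neighbourhood of `X`. -/
theorem elim_closure (hG : IsClosed {p : E × E | p.1 ≤ p.2}) {M X : Set E}
    (hM : IsCompact M) (hX : IsCompact X)
    (h : M ∩ (incHull X ∩ decHull X) = ∅) :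
    ∃ U : Set E, IsOpen U ∧ X ⊆ U ∧ M ∩ closure U = ∅ := by
  classical
  let ι := {U : Set E // IsOpen U ∧ X ⊆ U}
  have hMZ : M ∩ ⋂ i : ι, closure i.1 = ∅ := by
    rw [eq_empty_iff_forall_notMem]
    rintro z ⟨hzM, hz⟩
    have hz' : ∀ U : Set E, IsOpen U → X ⊆ U → z ∈ closure U := fun U hU hXU =>
      mem_iInter.mp hz ⟨U, hU, hXU⟩
    have hm := mem_hulls_of_mem_closures hG hX hz'
    exact (eq_empty_iff_forall_notMem.mp h z) ⟨hzM, hm.1, hm.2⟩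
  obtain ⟨t, ht⟩ := hM.elim_finite_subfamily_closed _ (fun i : ι => isClosed_closure) hMZ
  refine ⟨⋂ i ∈ t, (i : ι).1, isOpen_biInter_finset (fun i _ => i.2.1),
    subset_iInter₂ (fun i _ => i.2.2), ?_⟩
  rw [← subset_empty_iff, ← ht]
  refine inter_subset_inter_right M ?_
  exact subset_iInter₂ fun i hi => closure_mono (biInter_subset_of_mem hi)

/-- Pair elimination inside a compact subset of the product. -/
theorem elim_closure_pair (hG : IsClosed {p : E × E | p.1 ≤ p.2}) {N : Set (E × E)}
    (hN : IsCompact N) {X Y : Set E} (hX : IsCompact X) (hY : IsCompact Y)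
    (h : N ∩ ((incHull Y ∩ decHull Y) ×ˢ (incHull X ∩ decHull X)) = ∅) :
    ∃ V U : Set E, IsOpen V ∧ Y ⊆ V ∧ IsOpen U ∧ X ⊆ U ∧
      N ∩ (closure V ×ˢ closure U) = ∅ := by
  classical
  let ι := {VU : Set E × Set E //
    (IsOpen VU.1 ∧ Y ⊆ VU.1) ∧ (IsOpen VU.2 ∧ X ⊆ VU.2)}
  have hNZ : N ∩ ⋂ i : ι, (closure i.1.1 ×ˢ closure i.1.2) = ∅ := by
    rw [eq_empty_iff_forall_notMem]
    rintro ⟨a, b⟩ ⟨hab, hm⟩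
    have ha : ∀ V : Set E, IsOpen V → Y ⊆ V → a ∈ closure V := by
      intro V hV hYV
      exact (mem_iInter.mp hm ⟨(V, univ), ⟨hV, hYV⟩, isOpen_univ, subset_univ X⟩).1
    have hb : ∀ U : Set E, IsOpen U → X ⊆ U → b ∈ closure U := by
      intro U hU hXU
      exact (mem_iInter.mp hm ⟨(univ, U), ⟨isOpen_univ, subset_univ Y⟩, hU, hXU⟩).2
    have hA := mem_hulls_of_mem_closures hG hY ha
    have hB := mem_hulls_of_mem_closures hG hX hb
    exact (eq_empty_iff_forall_notMem.mp h (a, b)) ⟨hab, ⟨hA.1, hA.2⟩, hB.1, hB.2⟩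
  obtain ⟨t, ht⟩ := hN.elim_finite_subfamily_closed _
    (fun i : ι => (isClosed_closure (s := i.1.1)).prod isClosed_closure) hNZ
  refine ⟨⋂ i ∈ t, (i : ι).1.1, ⋂ i ∈ t, (i : ι).1.2,
    isOpen_biInter_finset (fun i _ => i.2.1.1),
    subset_iInter₂ (fun i _ => i.2.1.2),
    isOpen_biInter_finset (fun i _ => i.2.2.1),
    subset_iInter₂ (fun i _ => i.2.2.2), ?_⟩
  rw [← subset_empty_iff, ← ht]
  refine inter_subset_inter_right N ?_
  refine subset_iInter₂ fun i hi => ?_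
  refine prod_mono ?_ ?_ <;>
    exact closure_mono (biInter_subset_of_mem hi)

theorem exists_compact_superset_interior
    (hloc : ∀ x : E, ∃ K : Set E, IsCompact K ∧ K ∈ 𝓝 x)
    {X : Set E} (hX : IsCompact X) :
    ∃ K : Set E, IsCompact K ∧ X ⊆ interior K := by
  classical
  choose Kf hKf hKn using hloc
  have hXcov : X ⊆ ⋃ x : E, interior (Kf x) := fun z _ =>
    mem_iUnion.mpr ⟨z, mem_interior_iff_mem_nhds.mpr (hKn z)⟩
  obtain ⟨t, ht⟩ := hX.elim_finite_subcover (fun x => interior (Kf x))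
    (fun _ => isOpen_interior) hXcov
  refine ⟨⋃ x ∈ t, Kf x, t.finite_toSet.isCompact_biUnion (fun x _ => hKf x), ?_⟩
  refine ht.trans (interior_maximal ?_ (isOpen_biUnion fun x _ => isOpen_interior))
  exact iUnion₂_mono fun x _ => interior_subset

/-- The key step: enlarge a disjoint pair of a closed decreasing and a closed
increasing set so that their traces on a compact set become interior. -/
theorem step_ex (hG : IsClosed {p : E × E | p.1 ≤ p.2})
    (hloc : ∀ x : E, ∃ K : Set E, IsCompact K ∧ K ∈ 𝓝 x)
    {D C : Set E} (hDcl : IsClosed D) (hDd : decHull D = D)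
    (hCcl : IsClosed C) (hCi : incHull C = C) (hdisj : D ∩ C = ∅)
    {K : Set E} (hK : IsCompact K) :
    ∃ D' C' : Set E,
      IsClosed D' ∧ decHull D' = D' ∧ IsClosed C' ∧ incHull C' = C' ∧
      D ⊆ D' ∧ C ⊆ C' ∧ D' ∩ C' = ∅ ∧
      D ∩ K ⊆ interior D' ∧ C ∩ K ⊆ interior C' := by
  classical
  set X := D ∩ K with hXdef
  set Y := C ∩ K with hYdef
  have hX : IsCompact X := hK.inter_left hDcl
  have hY : IsCompact Y := hK.inter_left hCcl
  obtain ⟨K₁, hK₁, hXK₁⟩ := exists_compact_superset_interior hloc hX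
  obtain ⟨K₂, hK₂, hYK₂⟩ := exists_compact_superset_interior hloc hY
  have hdisj' : ∀ z : E, z ∈ D → z ∈ C → False := by
    intro z h1 h2; exact (eq_empty_iff_forall_notMem.mp hdisj z) ⟨h1, h2⟩
  -- elimination (i)
  have hi : (K₁ ∩ C) ∩ (incHull X ∩ decHull X) = ∅ := by
    rw [eq_empty_iff_forall_notMem]
    rintro z ⟨⟨_, hzC⟩, _, x', hx', hzx⟩
    exact hdisj' z (hDd ▸ ⟨x', hx'.1, hzx⟩) hzC
  obtain ⟨U₁, hU₁o, hXU₁, hU₁⟩ := elim_closure hG (hK₁.inter_right hCcl) hX hi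
  -- elimination (ii)
  have hii : (K₂ ∩ D) ∩ (incHull Y ∩ decHull Y) = ∅ := by
    rw [eq_empty_iff_forall_notMem]
    rintro z ⟨⟨_, hzD⟩, ⟨y', hy', hyz⟩, _⟩
    exact hdisj' z hzD (hCi ▸ ⟨y', hy'.1, hyz⟩)
  obtain ⟨V₁, hV₁o, hYV₁, hV₁⟩ := elim_closure hG (hK₂.inter_right hDcl) hY hii
  -- elimination (iii)
  have hNc : IsCompact ((K₂ ×ˢ K₁) ∩ {p : E × E | p.1 ≤ p.2}) :=
    (hK₂.prod hK₁).inter_right hG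
  have hiii : ((K₂ ×ˢ K₁) ∩ {p : E × E | p.1 ≤ p.2}) ∩
      ((incHull Y ∩ decHull Y) ×ˢ (incHull X ∩ decHull X)) = ∅ := by
    rw [eq_empty_iff_forall_notMem]
    rintro ⟨h', f⟩ ⟨⟨_, hle⟩, ⟨⟨y', hy', hyh⟩, _⟩, _, x', hx', hfx⟩
    have hfD : f ∈ D := hDd ▸ ⟨x', hx'.1, hfx⟩
    have hhD : h' ∈ D := hDd ▸ ⟨f, hfD, hle⟩
    exact hdisj' h' hhD (hCi ▸ ⟨y', hy'.1, hyh⟩)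
  obtain ⟨V₂, U₂, hV₂o, hYV₂, hU₂o, hXU₂, hVU⟩ := elim_closure_pair hG hNc hX hY hiii
  set U := U₁ ∩ U₂ ∩ interior K₁ with hUdef
  set V := V₁ ∩ V₂ ∩ interior K₂ with hVdef
  set F := K₁ ∩ closure U with hFdef
  set H := K₂ ∩ closure V with hHdef
  have hFc : IsCompact F := hK₁.inter_right isClosed_closure
  have hHc : IsCompact H := hK₂.inter_right isClosed_closure
  have hUo : IsOpen U := (hU₁o.inter hU₂o).inter isOpen_interior
  have hVo : IsOpen V := (hV₁o.inter hV₂o).inter isOpen_interior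
  have hXU : X ⊆ U := fun z hz => ⟨⟨hXU₁ hz, hXU₂ hz⟩, hXK₁ hz⟩
  have hYV : Y ⊆ V := fun z hz => ⟨⟨hYV₁ hz, hYV₂ hz⟩, hYK₂ hz⟩
  have hUF : U ⊆ F := fun z hz => ⟨interior_subset hz.2, subset_closure hz⟩
  have hVH : V ⊆ H := fun z hz => ⟨interior_subset hz.2, subset_closure hz⟩
  refine ⟨D ∪ decHull F, C ∪ incHull H,
    hDcl.union (isClosed_decHull hG hFc), ?_,
    hCcl.union (isClosed_incHull hG hHc), ?_,
    subset_union_left, subset_union_left, ?_, ?_, ?_⟩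
  · rw [decHull_union, hDd, decHull_idem]
  · rw [incHull_union, hCi, incHull_idem]
  · rw [eq_empty_iff_forall_notMem]
    rintro z ⟨hz1 | ⟨f, hf, hzf⟩, hz2 | ⟨h', hh, hhz⟩⟩
    · exact hdisj' z hz1 hz2
    · -- z ∈ D, z ∈ incHull H
      have hhD : h' ∈ D := hDd ▸ ⟨z, hz1, hhz⟩
      have : h' ∈ (K₂ ∩ D) ∩ closure V₁ :=
        ⟨⟨hh.1, hhD⟩, closure_mono (fun w hw => hw.1.1) hh.2⟩
      exact (eq_empty_iff_forall_notMem.mp hV₁ h') this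
    · -- z ∈ decHull F, z ∈ C
      have hfC : f ∈ C := hCi ▸ ⟨z, hz2, hzf⟩
      have : f ∈ (K₁ ∩ C) ∩ closure U₁ :=
        ⟨⟨hf.1, hfC⟩, closure_mono (fun w hw => hw.1.1) hf.2⟩
      exact (eq_empty_iff_forall_notMem.mp hU₁ f) this
    · -- z ∈ decHull F ∩ incHull H
      have hle : h' ≤ f := hhz.trans hzf
      have : (h', f) ∈ ((K₂ ×ˢ K₁) ∩ {p : E × E | p.1 ≤ p.2}) ∩
          (closure V₂ ×ˢ closure U₂) :=
        ⟨⟨⟨hh.1, hf.1⟩, hle⟩,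
         ⟨closure_mono (fun w hw => hw.1.2) hh.2, closure_mono (fun w hw => hw.1.2) hf.2⟩⟩
      exact (eq_empty_iff_forall_notMem.mp hVU (h', f)) this
  · exact fun z hz => interior_maximal (hUF.trans ((subset_decHull F).trans subset_union_right)) hUo (hXU hz)
  · exact fun z hz => interior_maximal (hVH.trans ((subset_incHull H).trans subset_union_right)) hVo (hYV hz)

/-- Normal separation of a closed decreasing set from a closed increasing set. -/
theorem normal_sep (hG : IsClosed {p : E × E | p.1 ≤ p.2})
    (hloc : ∀ x : E, ∃ K : Set E, IsCompact K ∧ K ∈ 𝓝 x)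
    (hsigma : ∃ K : ℕ → Set E, (∀ n, IsCompact (K n)) ∧ (⋃ n, K n) = Set.univ)
    {A B : Set E} (hAcl : IsClosed A) (hAd : decHull A = A)
    (hBcl : IsClosed B) (hBi : incHull B = B) (hAB : A ∩ B = ∅) :
    ∃ U V : Set E, IsOpen U ∧ decHull U = U ∧ IsOpen V ∧ incHull V = V ∧
      A ⊆ U ∧ B ⊆ V ∧ U ∩ V = ∅ := by
  classical
  obtain ⟨K, hKc, hKu⟩ := hsigma
  set KK : ℕ → Set E := fun n => ⋃ i ∈ Finset.range (n + 1), K i with hKKdef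
  have hKKc : ∀ n, IsCompact (KK n) := fun n =>
    (Finset.range (n + 1)).finite_toSet.isCompact_biUnion (fun i _ => hKc i)
  have hKKcov : ∀ z : E, ∃ n, z ∈ KK n := by
    intro z
    have hz : z ∈ ⋃ n, K n := hKu ▸ mem_univ z
    obtain ⟨n, hn⟩ := mem_iUnion.mp hz
    exact ⟨n, mem_biUnion (Finset.self_mem_range_succ n) hn⟩
  have hKKmono : ∀ {n m : ℕ}, n ≤ m → KK n ⊆ KK m := by
    intro n m hnm
    exact biUnion_subset_biUnion_left (Finset.range_subset_range.mpr (by omega))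
  let Inv : Set E × Set E → Prop := fun p =>
    IsClosed p.1 ∧ decHull p.1 = p.1 ∧ IsClosed p.2 ∧ incHull p.2 = p.2 ∧
      p.1 ∩ p.2 = ∅
  have hstep : ∀ (n : ℕ) (p : Set E × Set E), Inv p → ∃ q : Set E × Set E,
      Inv q ∧ p.1 ⊆ q.1 ∧ p.2 ⊆ q.2 ∧
        p.1 ∩ KK n ⊆ interior q.1 ∧ p.2 ∩ KK n ⊆ interior q.2 := by
    rintro n ⟨D, C⟩ ⟨h1, h2, h3, h4, h5⟩
    obtain ⟨D', C', hc1, hc2, hc3, hc4, hc5, hc6, hc7, hc8, hc9⟩ :=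
      step_ex hG hloc h1 h2 h3 h4 h5 (hKKc n)
    exact ⟨(D', C'), ⟨hc1, hc2, hc3, hc4, hc7⟩, hc5, hc6, hc8, hc9⟩
  choose! f hf using hstep
  let seq : ℕ → Set E × Set E := fun n => Nat.rec (A, B) (fun n p => f n p) n
  have hseqS : ∀ n, seq (n + 1) = f n (seq n) := fun n => rfl
  have hInv : ∀ n, Inv (seq n) := by
    intro n
    induction n with
    | zero => exact ⟨hAcl, hAd, hBcl, hBi, hAB⟩
    | succ n ih => rw [hseqS]; exact (hf n (seq n) ih).1
  have hsub1 : ∀ n, (seq n).1 ⊆ (seq (n + 1)).1 := by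
    intro n; rw [hseqS]; exact (hf n (seq n) (hInv n)).2.1
  have hsub2 : ∀ n, (seq n).2 ⊆ (seq (n + 1)).2 := by
    intro n; rw [hseqS]; exact (hf n (seq n) (hInv n)).2.2.1
  have hint1 : ∀ n, (seq n).1 ∩ KK n ⊆ interior (seq (n + 1)).1 := by
    intro n; rw [hseqS]; exact (hf n (seq n) (hInv n)).2.2.2.1
  have hint2 : ∀ n, (seq n).2 ∩ KK n ⊆ interior (seq (n + 1)).2 := by
    intro n; rw [hseqS]; exact (hf n (seq n) (hInv n)).2.2.2.2
  have hmono1 : ∀ {n m : ℕ}, n ≤ m → (seq n).1 ⊆ (seq m).1 := by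
    intro n m hnm
    induction m with
    | zero => rw [Nat.le_zero.mp hnm]
    | succ m ih =>
      rcases Nat.lt_or_ge n (m + 1) with h | h
      · exact (ih (by omega)).trans (hsub1 m)
      · rw [Nat.le_antisymm hnm h]
  have hmono2 : ∀ {n m : ℕ}, n ≤ m → (seq n).2 ⊆ (seq m).2 := by
    intro n m hnm
    induction m with
    | zero => rw [Nat.le_zero.mp hnm]
    | succ m ih =>
      rcases Nat.lt_or_ge n (m + 1) with h | h
      · exact (ih (by omega)).trans (hsub2 m)
      · rw [Nat.le_antisymm hnm h]
  refine ⟨⋃ n, interior (seq n).1, ⋃ n, interior (seq n).2,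
    isOpen_iUnion (fun n => isOpen_interior), ?_,
    isOpen_iUnion (fun n => isOpen_interior), ?_, ?_, ?_, ?_⟩
  · -- decreasing
    have hUeq : (⋃ n, interior (seq n).1) = ⋃ n, (seq n).1 := by
      refine subset_antisymm (iUnion_mono fun n => interior_subset) ?_
      intro z hz
      obtain ⟨n, hzn⟩ := mem_iUnion.mp hz
      obtain ⟨m, hzm⟩ := hKKcov z
      refine mem_iUnion.mpr ⟨max n m + 1, hint1 (max n m) ⟨?_, ?_⟩⟩
      · exact hmono1 (le_max_left n m) hzn
      · exact hKKmono (le_max_right n m) hzm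
    rw [hUeq, decHull_iUnion]
    exact iUnion_congr fun n => (hInv n).2.1
  · have hVeq : (⋃ n, interior (seq n).2) = ⋃ n, (seq n).2 := by
      refine subset_antisymm (iUnion_mono fun n => interior_subset) ?_
      intro z hz
      obtain ⟨n, hzn⟩ := mem_iUnion.mp hz
      obtain ⟨m, hzm⟩ := hKKcov z
      refine mem_iUnion.mpr ⟨max n m + 1, hint2 (max n m) ⟨?_, ?_⟩⟩
      · exact hmono2 (le_max_left n m) hzn
      · exact hKKmono (le_max_right n m) hzm
    rw [hVeq, incHull_iUnion]
    exact iUnion_congr fun n => (hInv n).2.2.2.1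
  · -- A ⊆ U
    intro z hz
    obtain ⟨m, hzm⟩ := hKKcov z
    have : z ∈ (seq m).1 ∩ KK m := ⟨hmono1 (Nat.zero_le m) hz, hzm⟩
    exact mem_iUnion.mpr ⟨m + 1, hint1 m this⟩
  · intro z hz
    obtain ⟨m, hzm⟩ := hKKcov z
    have : z ∈ (seq m).2 ∩ KK m := ⟨hmono2 (Nat.zero_le m) hz, hzm⟩
    exact mem_iUnion.mpr ⟨m + 1, hint2 m this⟩
  · rw [eq_empty_iff_forall_notMem]
    rintro z ⟨hz1, hz2⟩
    obtain ⟨n, hzn⟩ := mem_iUnion.mp hz1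
    obtain ⟨m, hzm⟩ := mem_iUnion.mp hz2
    have h1 : z ∈ (seq (max n m)).1 := hmono1 (le_max_left n m) (interior_subset hzn)
    have h2 : z ∈ (seq (max n m)).2 := hmono2 (le_max_right n m) (interior_subset hzm)
    exact (eq_empty_iff_forall_notMem.mp (hInv (max n m)).2.2.2.2 z) ⟨h1, h2⟩

/-- Elimination for increasing hulls: if no point of the compact set `s` lies
above a point of `K₂` belonging to both hulls of `Y`, then some open
neighbourhood `V` of `Y` satisfies `s ∩ incHull (K₂ ∩ closure V) = ∅`. -/
theorem elim_incHull (hG : IsClosed {p : E × E | p.1 ≤ p.2})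
    {K₂ Y s : Set E} (hK₂ : IsCompact K₂) (hY : IsCompact Y) (hs : IsCompact s)
    (hcond : ∀ z ∈ s, ∀ h, h ∈ K₂ → h ∈ incHull Y → h ∈ decHull Y → ¬ h ≤ z) :
    ∃ V : Set E, IsOpen V ∧ Y ⊆ V ∧ s ∩ incHull (K₂ ∩ closure V) = ∅ := by
  classical
  let ι := {V : Set E // IsOpen V ∧ Y ⊆ V}
  have hZcl : ∀ i : ι, IsClosed (incHull (K₂ ∩ closure i.1)) := fun i =>
    isClosed_incHull hG (hK₂.inter_right isClosed_closure)
  have hsZ : s ∩ ⋂ i : ι, incHull (K₂ ∩ closure i.1) = ∅ := by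
    rw [eq_empty_iff_forall_notMem]
    rintro z ⟨hzs, hz⟩
    -- the compact directed family `K₂ ∩ closure V ∩ decHull {z}`
    have hT : ∀ i : ι, (K₂ ∩ closure i.1 ∩ decHull {z}).Nonempty := by
      intro i
      obtain ⟨h, hh, hhz⟩ := mem_iInter.mp hz i
      exact ⟨h, ⟨hh.1, hh.2⟩, z, rfl, hhz⟩
    have hne : ((K₂ ∩ decHull {z}) ∩ ⋂ i : ι, closure i.1).Nonempty := by
      by_contra hemp
      rw [not_nonempty_iff_eq_empty] at hemp
      obtain ⟨t, ht⟩ := (hK₂.inter_right (isClosed_decHull hG isCompact_singleton)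
        ).elim_finite_subfamily_closed (fun i : ι => closure i.1)
        (fun i => isClosed_closure) hemp
      have hVo : IsOpen (⋂ i ∈ t, (i : ι).1) := isOpen_biInter_finset (fun i _ => i.2.1)
      have hYV : Y ⊆ ⋂ i ∈ t, (i : ι).1 := subset_iInter₂ (fun i _ => i.2.2)
      obtain ⟨h, hh, hhz⟩ := mem_iInter.mp hz ⟨_, hVo, hYV⟩
      have hmem : h ∈ (K₂ ∩ decHull {z}) ∩ ⋂ i ∈ t, closure (i : ι).1 := by
        refine ⟨⟨hh.1, z, rfl, hhz⟩, ?_⟩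
        refine mem_iInter₂.mpr fun i hi => ?_
        exact closure_mono (biInter_subset_of_mem hi) hh.2
      rw [ht] at hmem
      exact hmem
    obtain ⟨h, hh⟩ := hne
    have hhK₂ : h ∈ K₂ := hh.1.1
    have hhz : h ≤ z := by
      obtain ⟨w, hw, hle⟩ := hh.1.2
      rcases hw with rfl
      exact hle
    have hhcl : ∀ V : Set E, IsOpen V → Y ⊆ V → h ∈ closure V := fun V hV hYV =>
      mem_iInter.mp hh.2 ⟨V, hV, hYV⟩
    have hhulls := mem_hulls_of_mem_closures hG hY hhcl
    exact hcond z hzs h hhK₂ hhulls.1 hhulls.2 hhz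
  obtain ⟨t, ht⟩ := hs.elim_finite_subfamily_closed _ hZcl hsZ
  refine ⟨⋂ i ∈ t, (i : ι).1, isOpen_biInter_finset (fun i _ => i.2.1),
    subset_iInter₂ (fun i _ => i.2.2), ?_⟩
  rw [← subset_empty_iff, ← ht]
  refine inter_subset_inter_right s ?_
  refine subset_iInter₂ fun i hi => ?_
  exact incHull_mono (inter_subset_inter_right K₂
    (closure_mono (biInter_subset_of_mem hi)))

theorem elim_decHull (hG : IsClosed {p : E × E | p.1 ≤ p.2})
    {K₁ X s : Set E} (hK₁ : IsCompact K₁) (hX : IsCompact X) (hs : IsCompact s)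
    (hcond : ∀ z ∈ s, ∀ f, f ∈ K₁ → f ∈ incHull X → f ∈ decHull X → ¬ z ≤ f) :
    ∃ U : Set E, IsOpen U ∧ X ⊆ U ∧ s ∩ decHull (K₁ ∩ closure U) = ∅ := by
  classical
  let ι := {U : Set E // IsOpen U ∧ X ⊆ U}
  have hZcl : ∀ i : ι, IsClosed (decHull (K₁ ∩ closure i.1)) := fun i =>
    isClosed_decHull hG (hK₁.inter_right isClosed_closure)
  have hsZ : s ∩ ⋂ i : ι, decHull (K₁ ∩ closure i.1) = ∅ := by
    rw [eq_empty_iff_forall_notMem]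
    rintro z ⟨hzs, hz⟩
    have hT : ∀ i : ι, (K₁ ∩ closure i.1 ∩ incHull {z}).Nonempty := by
      intro i
      obtain ⟨f, hf, hzf⟩ := mem_iInter.mp hz i
      exact ⟨f, ⟨hf.1, hf.2⟩, z, rfl, hzf⟩
    have hne : ((K₁ ∩ incHull {z}) ∩ ⋂ i : ι, closure i.1).Nonempty := by
      by_contra hemp
      rw [not_nonempty_iff_eq_empty] at hemp
      obtain ⟨t, ht⟩ := (hK₁.inter_right (isClosed_incHull hG isCompact_singleton)
        ).elim_finite_subfamily_closed (fun i : ι => closure i.1)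
        (fun i => isClosed_closure) hemp
      have hUo : IsOpen (⋂ i ∈ t, (i : ι).1) := isOpen_biInter_finset (fun i _ => i.2.1)
      have hXU : X ⊆ ⋂ i ∈ t, (i : ι).1 := subset_iInter₂ (fun i _ => i.2.2)
      obtain ⟨f, hf, hzf⟩ := mem_iInter.mp hz ⟨_, hUo, hXU⟩
      have hmem : f ∈ (K₁ ∩ incHull {z}) ∩ ⋂ i ∈ t, closure (i : ι).1 := by
        refine ⟨⟨hf.1, z, rfl, hzf⟩, ?_⟩
        refine mem_iInter₂.mpr fun i hi => ?_
        exact closure_mono (biInter_subset_of_mem hi) hf.2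
      rw [ht] at hmem
      exact hmem
    obtain ⟨f, hf⟩ := hne
    have hfK₁ : f ∈ K₁ := hf.1.1
    have hzf : z ≤ f := by
      obtain ⟨w, hw, hle⟩ := hf.1.2
      rcases hw with rfl
      exact hle
    have hfcl : ∀ U : Set E, IsOpen U → X ⊆ U → f ∈ closure U := fun U hU hXU =>
      mem_iInter.mp hf.2 ⟨U, hU, hXU⟩
    have hhulls := mem_hulls_of_mem_closures hG hX hfcl
    exact hcond z hzs f hfK₁ hhulls.1 hhulls.2 hzf
  obtain ⟨t, ht⟩ := hs.elim_finite_subfamily_closed _ hZcl hsZ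
  refine ⟨⋂ i ∈ t, (i : ι).1, isOpen_biInter_finset (fun i _ => i.2.1),
    subset_iInter₂ (fun i _ => i.2.2), ?_⟩
  rw [← subset_empty_iff, ← ht]
  refine inter_subset_inter_right s ?_
  refine subset_iInter₂ fun i hi => ?_
  exact decHull_mono (inter_subset_inter_right K₁
    (closure_mono (biInter_subset_of_mem hi)))

/-- Step lemma for the convexity part. -/
theorem step1_ex (hG : IsClosed {p : E × E | p.1 ≤ p.2})
    (hloc : ∀ x : E, ∃ K : Set E, IsCompact K ∧ K ∈ 𝓝 x)
    (hsigma : ∃ K : ℕ → Set E, (∀ n, IsCompact (K n)) ∧ (⋃ n, K n) = Set.univ)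
    {Kh C W : Set E} (hKh : IsCompact Kh)
    (hCconv : decHull C ∩ incHull C = C) (hCK : C ⊆ interior Kh)
    (hWo : IsOpen W) (hWC : W ⊆ C)
    {D Cc P Γ : Set E}
    (hDcl : IsClosed D) (hDd : decHull D = D)
    (hCcl : IsClosed Cc) (hCi : incHull Cc = Cc)
    (hPc : IsCompact P) (hΓc : IsCompact Γ)
    (hDP : D ⊆ decHull P) (hCΓ : Cc ⊆ incHull Γ)
    (hS5 : incHull Γ ∩ D ⊆ W) (hS6 : decHull P ∩ Cc ⊆ W)
    {K : Set E} (hK : IsCompact K) :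
    ∃ D' C' P' Γ' : Set E,
      IsClosed D' ∧ decHull D' = D' ∧ IsClosed C' ∧ incHull C' = C' ∧
      IsCompact P' ∧ IsCompact Γ' ∧ D' ⊆ decHull P' ∧ C' ⊆ incHull Γ' ∧
      incHull Γ' ∩ D' ⊆ W ∧ decHull P' ∩ C' ⊆ W ∧
      D ⊆ D' ∧ Cc ⊆ C' ∧ D ∩ K ⊆ interior D' ∧ Cc ∩ K ⊆ interior C' := by
  classical
  have hSn : Cc ∩ D ⊆ W := fun z hz => hS5 ⟨hCΓ hz.1, hz.2⟩
  have hSand : ∀ {a b z : E}, a ∈ W → b ∈ W → a ≤ z → z ≤ b → z ∈ C := by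
    intro a b z ha hb haz hzb
    rw [← hCconv]
    exact ⟨⟨b, hWC hb, hzb⟩, ⟨a, hWC ha, haz⟩⟩
  set X := D ∩ K with hXdef
  set Y := Cc ∩ K with hYdef
  have hX : IsCompact X := hK.inter_left hDcl
  have hY : IsCompact Y := hK.inter_left hCcl
  obtain ⟨K₁, hK₁, hXK₁⟩ := exists_compact_superset_interior hloc hX
  obtain ⟨K₂, hK₂, hYK₂⟩ := exists_compact_superset_interior hloc hY
  have hXD : X ⊆ D := inter_subset_left
  have hYC : Y ⊆ Cc := inter_subset_left
  -- (E-c) : pair elimination for H × F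
  have hNcl : IsClosed ({p : E × E | p.1 ≤ p.2} ∩ (W ×ˢ W)ᶜ) :=
    hG.inter (hWo.prod hWo).isClosed_compl
  have hNcpt : IsCompact ((K₂ ×ˢ K₁) ∩ ({p : E × E | p.1 ≤ p.2} ∩ (W ×ˢ W)ᶜ)) :=
    (hK₂.prod hK₁).inter_right hNcl
  have hcond_c : ((K₂ ×ˢ K₁) ∩ ({p : E × E | p.1 ≤ p.2} ∩ (W ×ˢ W)ᶜ)) ∩
      ((incHull Y ∩ decHull Y) ×ˢ (incHull X ∩ decHull X)) = ∅ := by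
    rw [eq_empty_iff_forall_notMem]
    rintro ⟨h, f⟩ ⟨⟨-, hle, hnW⟩, ⟨hhi, -⟩, -, hfd⟩
    have hhC : h ∈ Cc := hCi ▸ incHull_mono hYC hhi
    have hfD : f ∈ D := hDd ▸ decHull_mono hXD hfd
    have hhD : h ∈ D := hDd ▸ ⟨f, hfD, hle⟩
    have hfC : f ∈ Cc := hCi ▸ ⟨h, hhC, hle⟩
    exact hnW ⟨hSn ⟨hhC, hhD⟩, hSn ⟨hfC, hfD⟩⟩
  obtain ⟨Vc, Uc, hVco, hYVc, hUco, hXUc, hcE⟩ :=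
    elim_closure_pair hG hNcpt hX hY hcond_c
  -- (E-d) : past fat `Γ` against `F`
  have hMdc : IsCompact (Prod.snd ''
      ((Γ ×ˢ K₁) ∩ ({p : E × E | p.1 ≤ p.2} ∩ (W ×ˢ W)ᶜ))) :=
    (((hΓc.prod hK₁).inter_right hNcl).image continuous_snd)
  have hcond_d : (Prod.snd ''
      ((Γ ×ˢ K₁) ∩ ({p : E × E | p.1 ≤ p.2} ∩ (W ×ˢ W)ᶜ))) ∩
      (incHull X ∩ decHull X) = ∅ := by
    rw [eq_empty_iff_forall_notMem]
    rintro f' ⟨⟨⟨q, f''⟩, ⟨⟨hqΓ, -⟩, hle, hnW⟩, rfl⟩, -, hfd⟩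
    have hfD : f'' ∈ D := hDd ▸ decHull_mono hXD hfd
    have hfW : f'' ∈ W := hS5 ⟨⟨q, hqΓ, hle⟩, hfD⟩
    have hqD : q ∈ D := hDd ▸ ⟨f'', hfD, hle⟩
    have hqW : q ∈ W := hS5 ⟨subset_incHull Γ hqΓ, hqD⟩
    exact hnW ⟨hqW, hfW⟩
  obtain ⟨Ud, hUdo, hXUd, hdE⟩ := elim_closure hG hMdc hX hcond_d
  -- (E-e) : `H` against past fat `P`
  have hMec : IsCompact (Prod.fst ''
      ((K₂ ×ˢ P) ∩ ({p : E × E | p.1 ≤ p.2} ∩ (W ×ˢ W)ᶜ))) :=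
    (((hK₂.prod hPc).inter_right hNcl).image continuous_fst)
  have hcond_e : (Prod.fst ''
      ((K₂ ×ˢ P) ∩ ({p : E × E | p.1 ≤ p.2} ∩ (W ×ˢ W)ᶜ))) ∩
      (incHull Y ∩ decHull Y) = ∅ := by
    rw [eq_empty_iff_forall_notMem]
    rintro h' ⟨⟨⟨h'', p⟩, ⟨⟨-, hpP⟩, hle, hnW⟩, rfl⟩, hhi, -⟩
    have hhC : h'' ∈ Cc := hCi ▸ incHull_mono hYC hhi
    have hhW : h'' ∈ W := hS6 ⟨⟨p, hpP, hle⟩, hhC⟩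
    have hpC : p ∈ Cc := hCi ▸ ⟨h'', hhC, hle⟩
    have hpW : p ∈ W := hS6 ⟨subset_decHull P hpP, hpC⟩
    exact hnW ⟨hhW, hpW⟩
  obtain ⟨Ve, hVeo, hYVe, heE⟩ := elim_closure hG hMec hY hcond_e
  -- (E-f) : make `incHull H ∩ D ⊆ W` possible
  have hsf : IsCompact (Kh ∩ (D ∩ Wᶜ)) :=
    hKh.inter_right (hDcl.inter hWo.isClosed_compl)
  have hcond_f : ∀ z ∈ Kh ∩ (D ∩ Wᶜ), ∀ h, h ∈ K₂ → h ∈ incHull Y →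
      h ∈ decHull Y → ¬ h ≤ z := by
    rintro z ⟨-, hzD, hzW⟩ h - hhi - hle
    have hhC : h ∈ Cc := hCi ▸ incHull_mono hYC hhi
    have hzC : z ∈ Cc := hCi ▸ ⟨h, hhC, hle⟩
    exact hzW (hSn ⟨hzC, hzD⟩)
  obtain ⟨Vf, hVfo, hYVf, hfE⟩ := elim_incHull hG hK₂ hY hsf hcond_f
  -- (E-g) : make `decHull F ∩ Cc ⊆ W` possible
  have hsg : IsCompact (Kh ∩ (Cc ∩ Wᶜ)) :=
    hKh.inter_right (hCcl.inter hWo.isClosed_compl)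
  have hcond_g : ∀ z ∈ Kh ∩ (Cc ∩ Wᶜ), ∀ f, f ∈ K₁ → f ∈ incHull X →
      f ∈ decHull X → ¬ z ≤ f := by
    rintro z ⟨-, hzC, hzW⟩ f - - hfd hle
    have hfD : f ∈ D := hDd ▸ decHull_mono hXD hfd
    have hzD : z ∈ D := hDd ▸ ⟨f, hfD, hle⟩
    exact hzW (hSn ⟨hzC, hzD⟩)
  obtain ⟨Ug, hUgo, hXUg, hgE⟩ := elim_decHull hG hK₁ hX hsg hcond_g
  -- the compact neighbourhoods
  set U := Uc ∩ Ud ∩ Ug ∩ interior K₁ with hUdef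
  set V := Vc ∩ Ve ∩ Vf ∩ interior K₂ with hVdef
  have hUo : IsOpen U := (((hUco.inter hUdo).inter hUgo).inter isOpen_interior)
  have hVo : IsOpen V := (((hVco.inter hVeo).inter hVfo).inter isOpen_interior)
  have hXU : X ⊆ U := fun z hz => ⟨⟨⟨hXUc hz, hXUd hz⟩, hXUg hz⟩, hXK₁ hz⟩
  have hYV : Y ⊆ V := fun z hz => ⟨⟨⟨hYVc hz, hYVe hz⟩, hYVf hz⟩, hYK₂ hz⟩
  set F := K₁ ∩ closure U with hFdef
  set H := K₂ ∩ closure V with hHdef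
  have hFc : IsCompact F := hK₁.inter_right isClosed_closure
  have hHc : IsCompact H := hK₂.inter_right isClosed_closure
  have hUF : U ⊆ F := fun z hz => ⟨interior_subset hz.2, subset_closure hz⟩
  have hVH : V ⊆ H := fun z hz => ⟨interior_subset hz.2, subset_closure hz⟩
  -- pair facts
  have pairHF : ∀ h ∈ H, ∀ f ∈ F, h ≤ f → h ∈ W ∧ f ∈ W := by
    intro h hh f hf hle
    by_contra hbad
    have hmem : (h, f) ∈ ((K₂ ×ˢ K₁) ∩ ({p : E × E | p.1 ≤ p.2} ∩ (W ×ˢ W)ᶜ)) ∩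
        (closure Vc ×ˢ closure Uc) := by
      refine ⟨⟨⟨hh.1, hf.1⟩, hle, fun hc => hbad ⟨hc.1, hc.2⟩⟩, ?_, ?_⟩
      · exact closure_mono (fun w hw => hw.1.1.1) hh.2
      · exact closure_mono (fun w hw => hw.1.1.1) hf.2
    rw [hcE] at hmem
    exact hmem
  have pairΓF : ∀ q ∈ Γ, ∀ f ∈ F, q ≤ f → q ∈ W ∧ f ∈ W := by
    intro q hq f hf hle
    by_contra hbad
    have hmem : f ∈ (Prod.snd ''
        ((Γ ×ˢ K₁) ∩ ({p : E × E | p.1 ≤ p.2} ∩ (W ×ˢ W)ᶜ))) ∩ closure Ud := by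
      refine ⟨⟨(q, f), ⟨⟨hq, hf.1⟩, hle, fun hc => hbad ⟨hc.1, hc.2⟩⟩, rfl⟩, ?_⟩
      exact closure_mono (fun w hw => hw.1.1.2) hf.2
    rw [hdE] at hmem
    exact hmem
  have pairHP : ∀ h ∈ H, ∀ p ∈ P, h ≤ p → h ∈ W ∧ p ∈ W := by
    intro h hh p hp hle
    by_contra hbad
    have hmem : h ∈ (Prod.fst ''
        ((K₂ ×ˢ P) ∩ ({p : E × E | p.1 ≤ p.2} ∩ (W ×ˢ W)ᶜ))) ∩ closure Ve := by
      refine ⟨⟨(h, p), ⟨⟨hh.1, hp⟩, hle, fun hc => hbad ⟨hc.1, hc.2⟩⟩, rfl⟩, ?_⟩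
      exact closure_mono (fun w hw => hw.1.1.2) hh.2
    rw [heE] at hmem
    exact hmem
  -- the two cleanness facts
  have iHD : incHull H ∩ D ⊆ W := by
    rintro z ⟨⟨h, hhH, hhz⟩, hzD⟩
    by_contra hzW
    obtain ⟨p, hpP, hzp⟩ := hDP hzD
    obtain ⟨hhW, hpW⟩ := pairHP h hhH p hpP (hhz.trans hzp)
    have hzKh : z ∈ Kh := interior_subset (hCK (hSand hhW hpW hhz hzp))
    have hmem : z ∈ (Kh ∩ (D ∩ Wᶜ)) ∩ incHull (K₂ ∩ closure Vf) := by
      refine ⟨⟨hzKh, hzD, hzW⟩, h, ⟨hhH.1, ?_⟩, hhz⟩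
      exact closure_mono (fun w hw => hw.1.2) hhH.2
    rw [hfE] at hmem
    exact hmem
  have dFC : decHull F ∩ Cc ⊆ W := by
    rintro z ⟨⟨f, hfF, hzf⟩, hzC⟩
    by_contra hzW
    obtain ⟨q, hqΓ, hqz⟩ := hCΓ hzC
    obtain ⟨hqW, hfW⟩ := pairΓF q hqΓ f hfF (hqz.trans hzf)
    have hzKh : z ∈ Kh := interior_subset (hCK (hSand hqW hfW hqz hzf))
    have hmem : z ∈ (Kh ∩ (Cc ∩ Wᶜ)) ∩ decHull (K₁ ∩ closure Ug) := by
      refine ⟨⟨hzKh, hzC, hzW⟩, f, ⟨hfF.1, ?_⟩, hzf⟩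
      exact closure_mono (fun w hw => hw.1.2) hfF.2
    rw [hgE] at hmem
    exact hmem
  -- pruning sets
  set BV := incHull (Γ ∪ H) ∩ decHull F ∩ Wᶜ with hBVdef
  have hBVcl : IsClosed BV :=
    ((isClosed_incHull hG (hΓc.union hHc)).inter
      (isClosed_decHull hG hFc)).inter hWo.isClosed_compl
  have hBVKh : BV ⊆ Kh := by
    rintro z ⟨⟨⟨g, hg, hgz⟩, f, hfF, hzf⟩, -⟩
    rcases hg with hg | hg
    · obtain ⟨hgW, hfW⟩ := pairΓF g hg f hfF (hgz.trans hzf)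
      exact interior_subset (hCK (hSand hgW hfW hgz hzf))
    · obtain ⟨hgW, hfW⟩ := pairHF g hg f hfF (hgz.trans hzf)
      exact interior_subset (hCK (hSand hgW hfW hgz hzf))
  have hBVc : IsCompact BV := hKh.of_isClosed_subset hBVcl hBVKh
  have hDBV : D ∩ incHull BV = ∅ := by
    rw [eq_empty_iff_forall_notMem]
    rintro z' ⟨hz'D, b, hb, hbz'⟩
    have hbD : b ∈ D := hDd ▸ ⟨z', hz'D, hbz'⟩
    obtain ⟨⟨hbi, -⟩, hbW⟩ := hb
    rw [incHull_union] at hbi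
    rcases hbi with hbi | hbi
    · exact hbW (hS5 ⟨hbi, hbD⟩)
    · exact hbW (iHD ⟨hbi, hbD⟩)
  obtain ⟨UQ, VP, hUQo, hUQd, hVPo, hVPi, hDUQ, hBVVP, hdisj1⟩ :=
    normal_sep hG hloc hsigma hDcl hDd (isClosed_incHull hG hBVc)
      (incHull_idem BV) hDBV
  set BU := incHull H ∩ decHull (P ∪ F) ∩ Wᶜ with hBUdef
  have hBUcl : IsClosed BU :=
    ((isClosed_incHull hG hHc).inter
      (isClosed_decHull hG (hPc.union hFc))).inter hWo.isClosed_compl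
  have hBUKh : BU ⊆ Kh := by
    rintro z ⟨⟨⟨h, hh, hhz⟩, p, hp, hzp⟩, -⟩
    rcases hp with hp | hp
    · obtain ⟨hhW, hpW⟩ := pairHP h hh p hp (hhz.trans hzp)
      exact interior_subset (hCK (hSand hhW hpW hhz hzp))
    · obtain ⟨hhW, hpW⟩ := pairHF h hh p hp (hhz.trans hzp)
      exact interior_subset (hCK (hSand hhW hpW hhz hzp))
  have hBUc : IsCompact BU := hKh.of_isClosed_subset hBUcl hBUKh
  have hBUC : decHull BU ∩ Cc = ∅ := by
    rw [eq_empty_iff_forall_notMem]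
    rintro z' ⟨⟨b, hb, hz'b⟩, hz'C⟩
    have hbC : b ∈ Cc := hCi ▸ ⟨z', hz'C, hz'b⟩
    obtain ⟨⟨-, hbd⟩, hbW⟩ := hb
    rw [decHull_union] at hbd
    rcases hbd with hbd | hbd
    · exact hbW (hS6 ⟨hbd, hbC⟩)
    · exact hbW (dFC ⟨hbd, hbC⟩)
  obtain ⟨UP, VQ, hUPo, hUPd, hVQo, hVQi, hBUUP, hCVQ, hdisj2⟩ :=
    normal_sep hG hloc hsigma (isClosed_decHull hG hBUc) (decHull_idem BU)
      hCcl hCi hBUC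
  -- the new data
  refine ⟨D ∪ (decHull F \ VP), Cc ∪ (incHull H \ UP), P ∪ F, Γ ∪ H,
    ?_, ?_, ?_, ?_, hPc.union hFc, hΓc.union hHc, ?_, ?_, ?_, ?_,
    subset_union_left, subset_union_left, ?_, ?_⟩
  · exact hDcl.union ((isClosed_decHull hG hFc).inter hVPo.isClosed_compl)
  · -- decreasing
    refine subset_antisymm ?_ (subset_decHull _)
    rintro y ⟨z, hz, hyz⟩
    rcases hz with hz | ⟨hz1, hz2⟩
    · exact Or.inl (hDd ▸ ⟨z, hz, hyz⟩)
    · refine Or.inr ⟨decHull_idem F ▸ ⟨z, hz1, hyz⟩, fun hyVP => ?_⟩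
      exact hz2 (hVPi ▸ ⟨y, hyVP, hyz⟩)
  · exact hCcl.union ((isClosed_incHull hG hHc).inter hUPo.isClosed_compl)
  · refine subset_antisymm ?_ (subset_incHull _)
    rintro y ⟨z, hz, hzy⟩
    rcases hz with hz | ⟨hz1, hz2⟩
    · exact Or.inl (hCi ▸ ⟨z, hz, hzy⟩)
    · refine Or.inr ⟨incHull_idem H ▸ ⟨z, hz1, hzy⟩, fun hyUP => ?_⟩
      exact hz2 (hUPd ▸ ⟨y, hyUP, hzy⟩)
  · -- D' ⊆ decHull P'
    rintro z (hz | hz)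
    · exact decHull_mono subset_union_left (hDP hz)
    · exact decHull_mono subset_union_right hz.1
  · rintro z (hz | hz)
    · exact incHull_mono subset_union_left (hCΓ hz)
    · exact incHull_mono subset_union_right hz.1
  · -- incHull Γ' ∩ D' ⊆ W
    rintro z ⟨hzΓ', hzD'⟩
    by_contra hzW
    rw [incHull_union] at hzΓ'
    rcases hzD' with hzD | ⟨hzF, hzVP⟩
    · rcases hzΓ' with hzi | hzi
      · exact hzW (hS5 ⟨hzi, hzD⟩)
      · exact hzW (iHD ⟨hzi, hzD⟩)
    · have hzBV : z ∈ BV := ⟨⟨incHull_union Γ H ▸ hzΓ', hzF⟩, hzW⟩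
      exact hzVP (hBVVP (subset_incHull BV hzBV))
  · -- decHull P' ∩ C' ⊆ W
    rintro z ⟨hzP', hzC'⟩
    by_contra hzW
    rw [decHull_union] at hzP'
    rcases hzC' with hzC | ⟨hzH, hzUP⟩
    · rcases hzP' with hzd | hzd
      · exact hzW (hS6 ⟨hzd, hzC⟩)
      · exact hzW (dFC ⟨hzd, hzC⟩)
    · have hzBU : z ∈ BU := ⟨⟨hzH, decHull_union P F ▸ hzP'⟩, hzW⟩
      exact hzUP (hBUUP (subset_decHull BU hzBU))
  · -- D ∩ K ⊆ interior D'
    refine fun z hz => interior_maximal ?_ (hUo.inter hUQo) ⟨hXU hz, hDUQ (hXD hz)⟩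
    rintro z' ⟨hz'U, hz'UQ⟩
    refine Or.inr ⟨subset_decHull F (hUF hz'U), fun hz'VP => ?_⟩
    exact (eq_empty_iff_forall_notMem.mp hdisj1 z') ⟨hz'UQ, hz'VP⟩
  · refine fun z hz => interior_maximal ?_ (hVo.inter hVQo) ⟨hYV hz, hCVQ (hYC hz)⟩
    rintro z' ⟨hz'V, hz'VQ⟩
    refine Or.inr ⟨subset_incHull H (hVH hz'V), fun hz'UP => ?_⟩
    exact (eq_empty_iff_forall_notMem.mp hdisj2 z') ⟨hz'UP, hz'VQ⟩

/-- The convexity statement. -/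
theorem convex_sep (hG : IsClosed {p : E × E | p.1 ≤ p.2})
    (hloc : ∀ x : E, ∃ K : Set E, IsCompact K ∧ K ∈ 𝓝 x)
    (hsigma : ∃ K : ℕ → Set E, (∀ n, IsCompact (K n)) ∧ (⋃ n, K n) = Set.univ)
    (hlc : ∀ x : E, ∀ O ∈ 𝓝 x, ∃ C ∈ 𝓝 x, (decHull C ∩ incHull C = C) ∧ C ⊆ O)
    (x : E) (O : Set E) (hO : IsOpen O) (hxO : x ∈ O) :
    ∃ U V : Set E, IsOpen U ∧ decHull U = U ∧ IsOpen V ∧ incHull V = V ∧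
      x ∈ U ∩ V ∧ U ∩ V ⊆ O := by
  classical
  obtain ⟨Kh, hKhc, hKhn⟩ := hloc x
  have hOKh : O ∩ interior Kh ∈ 𝓝 x :=
    Filter.inter_mem (hO.mem_nhds hxO)
      (isOpen_interior.mem_nhds (mem_interior_iff_mem_nhds.mpr hKhn))
  obtain ⟨C, hCn, hCconv, hCsub⟩ := hlc x _ hOKh
  set W := interior C with hWdef
  have hWo : IsOpen W := isOpen_interior
  have hxW : x ∈ W := mem_interior_iff_mem_nhds.mpr hCn
  have hWC : W ⊆ C := interior_subset
  have hCK : C ⊆ interior Kh := fun z hz => (hCsub hz).2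
  have hCO : C ⊆ O := fun z hz => (hCsub hz).1
  -- saturation : `[x] ⊆ W`
  have hsat : incHull {x} ∩ decHull {x} ⊆ W := by
    rintro z ⟨⟨a, ha, haz⟩, b, hb, hzb⟩
    obtain ⟨C', hC'n, hC'conv, hC'sub⟩ := hlc x W (hWo.mem_nhds hxW)
    have hxC' : x ∈ C' := mem_of_mem_nhds hC'n
    have haz' : x ≤ z := by rw [← mem_singleton_iff.mp ha]; exact haz
    have hzb' : z ≤ x := by rw [← mem_singleton_iff.mp hb]; exact hzb
    exact hC'sub (hC'conv ▸ ⟨⟨x, hxC', hzb'⟩, ⟨x, hxC', haz'⟩⟩)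
  -- the exhaustion
  obtain ⟨K, hKc, hKu⟩ := id hsigma
  set KK : ℕ → Set E := fun n => ⋃ i ∈ Finset.range (n + 1), K i with hKKdef
  have hKKc : ∀ n, IsCompact (KK n) := fun n =>
    (Finset.range (n + 1)).finite_toSet.isCompact_biUnion (fun i _ => hKc i)
  have hKKcov : ∀ z : E, ∃ n, z ∈ KK n := by
    intro z
    have hz : z ∈ ⋃ n, K n := hKu ▸ mem_univ z
    obtain ⟨n, hn⟩ := mem_iUnion.mp hz
    exact ⟨n, mem_biUnion (Finset.self_mem_range_succ n) hn⟩
  have hKKmono : ∀ {n m : ℕ}, n ≤ m → KK n ⊆ KK m := by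
    intro n m hnm
    exact biUnion_subset_biUnion_left (Finset.range_subset_range.mpr (by omega))
  -- the invariant
  let Inv : (Set E × Set E) × (Set E × Set E) → Prop := fun s =>
    IsClosed s.1.1 ∧ decHull s.1.1 = s.1.1 ∧ IsClosed s.1.2 ∧
      incHull s.1.2 = s.1.2 ∧ IsCompact s.2.1 ∧ IsCompact s.2.2 ∧
      s.1.1 ⊆ decHull s.2.1 ∧ s.1.2 ⊆ incHull s.2.2 ∧
      incHull s.2.2 ∩ s.1.1 ⊆ W ∧ decHull s.2.1 ∩ s.1.2 ⊆ W
  have hstep : ∀ (n : ℕ) (s : (Set E × Set E) × (Set E × Set E)), Inv s →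
      ∃ t : (Set E × Set E) × (Set E × Set E), Inv t ∧
        s.1.1 ⊆ t.1.1 ∧ s.1.2 ⊆ t.1.2 ∧
        s.1.1 ∩ KK n ⊆ interior t.1.1 ∧ s.1.2 ∩ KK n ⊆ interior t.1.2 := by
    rintro n ⟨⟨D, Cc⟩, ⟨P, Γ⟩⟩ ⟨h1, h2, h3, h4, h5, h6, h7, h8, h9, h10⟩
    obtain ⟨D', C', P', Γ', hc1, hc2, hc3, hc4, hc5, hc6, hc7, hc8, hc9, hc10,
      hc11, hc12, hc13, hc14⟩ :=
      step1_ex hG hloc hsigma hKhc hCconv hCK hWo hWC h1 h2 h3 h4 h5 h6 h7 h8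
        h9 h10 (hKKc n)
    exact ⟨((D', C'), (P', Γ')), ⟨hc1, hc2, hc3, hc4, hc5, hc6, hc7, hc8, hc9,
      hc10⟩, hc11, hc12, hc13, hc14⟩
  choose! f hf using hstep
  have hInv0 : Inv ((decHull {x}, incHull {x}), ({x}, {x})) := by
    refine ⟨isClosed_decHull hG isCompact_singleton, decHull_idem _,
      isClosed_incHull hG isCompact_singleton, incHull_idem _,
      isCompact_singleton, isCompact_singleton, Subset.rfl, Subset.rfl,
      ?_, ?_⟩
    · exact hsat
    · exact fun z hz => hsat ⟨hz.2, hz.1⟩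
  let seq : ℕ → (Set E × Set E) × (Set E × Set E) := fun n =>
    Nat.rec ((decHull {x}, incHull {x}), ({x}, {x})) (fun n p => f n p) n
  have hseqS : ∀ n, seq (n + 1) = f n (seq n) := fun n => rfl
  have hInv : ∀ n, Inv (seq n) := by
    intro n
    induction n with
    | zero => exact hInv0
    | succ n ih => rw [hseqS]; exact (hf n (seq n) ih).1
  have hsub1 : ∀ n, (seq n).1.1 ⊆ (seq (n + 1)).1.1 := by
    intro n; rw [hseqS]; exact (hf n (seq n) (hInv n)).2.1
  have hsub2 : ∀ n, (seq n).1.2 ⊆ (seq (n + 1)).1.2 := by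
    intro n; rw [hseqS]; exact (hf n (seq n) (hInv n)).2.2.1
  have hint1 : ∀ n, (seq n).1.1 ∩ KK n ⊆ interior (seq (n + 1)).1.1 := by
    intro n; rw [hseqS]; exact (hf n (seq n) (hInv n)).2.2.2.1
  have hint2 : ∀ n, (seq n).1.2 ∩ KK n ⊆ interior (seq (n + 1)).1.2 := by
    intro n; rw [hseqS]; exact (hf n (seq n) (hInv n)).2.2.2.2
  have hmono1 : ∀ {n m : ℕ}, n ≤ m → (seq n).1.1 ⊆ (seq m).1.1 := by
    intro n m hnm
    induction m with
    | zero => rw [Nat.le_zero.mp hnm]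
    | succ m ih =>
      rcases Nat.lt_or_ge n (m + 1) with h | h
      · exact (ih (by omega)).trans (hsub1 m)
      · rw [Nat.le_antisymm hnm h]
  have hmono2 : ∀ {n m : ℕ}, n ≤ m → (seq n).1.2 ⊆ (seq m).1.2 := by
    intro n m hnm
    induction m with
    | zero => rw [Nat.le_zero.mp hnm]
    | succ m ih =>
      rcases Nat.lt_or_ge n (m + 1) with h | h
      · exact (ih (by omega)).trans (hsub2 m)
      · rw [Nat.le_antisymm hnm h]
  refine ⟨⋃ n, interior (seq n).1.1, ⋃ n, interior (seq n).1.2,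
    isOpen_iUnion (fun n => isOpen_interior), ?_,
    isOpen_iUnion (fun n => isOpen_interior), ?_, ⟨?_, ?_⟩, ?_⟩
  · have hUeq : (⋃ n, interior (seq n).1.1) = ⋃ n, (seq n).1.1 := by
      refine subset_antisymm (iUnion_mono fun n => interior_subset) ?_
      intro z hz
      obtain ⟨n, hzn⟩ := mem_iUnion.mp hz
      obtain ⟨m, hzm⟩ := hKKcov z
      refine mem_iUnion.mpr ⟨max n m + 1, hint1 (max n m) ⟨?_, ?_⟩⟩
      · exact hmono1 (le_max_left n m) hzn
      · exact hKKmono (le_max_right n m) hzm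
    rw [hUeq, decHull_iUnion]
    exact iUnion_congr fun n => (hInv n).2.1
  · have hVeq : (⋃ n, interior (seq n).1.2) = ⋃ n, (seq n).1.2 := by
      refine subset_antisymm (iUnion_mono fun n => interior_subset) ?_
      intro z hz
      obtain ⟨n, hzn⟩ := mem_iUnion.mp hz
      obtain ⟨m, hzm⟩ := hKKcov z
      refine mem_iUnion.mpr ⟨max n m + 1, hint2 (max n m) ⟨?_, ?_⟩⟩
      · exact hmono2 (le_max_left n m) hzn
      · exact hKKmono (le_max_right n m) hzm
    rw [hVeq, incHull_iUnion]
    exact iUnion_congr fun n => (hInv n).2.2.2.1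
  · -- x ∈ U
    obtain ⟨m, hzm⟩ := hKKcov x
    have hx0 : x ∈ (seq 0).1.1 := subset_decHull {x} rfl
    have : x ∈ (seq m).1.1 ∩ KK m := ⟨hmono1 (Nat.zero_le m) hx0, hzm⟩
    exact mem_iUnion.mpr ⟨m + 1, hint1 m this⟩
  · obtain ⟨m, hzm⟩ := hKKcov x
    have hx0 : x ∈ (seq 0).1.2 := subset_incHull {x} rfl
    have : x ∈ (seq m).1.2 ∩ KK m := ⟨hmono2 (Nat.zero_le m) hx0, hzm⟩
    exact mem_iUnion.mpr ⟨m + 1, hint2 m this⟩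
  · -- U ∩ V ⊆ O
    rintro z ⟨hz1, hz2⟩
    obtain ⟨n, hzn⟩ := mem_iUnion.mp hz1
    obtain ⟨m, hzm⟩ := mem_iUnion.mp hz2
    have h1 : z ∈ (seq (max n m)).1.1 := hmono1 (le_max_left n m) (interior_subset hzn)
    have h2 : z ∈ (seq (max n m)).1.2 := hmono2 (le_max_right n m) (interior_subset hzm)
    have hzW : z ∈ W := (hInv (max n m)).2.2.2.2.2.2.2.2.1
      ⟨(hInv (max n m)).2.2.2.2.2.2.2.1 h2, h1⟩
    exact hCO (hWC hzW)

end OrdSepAux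

open OrdSepAux in
/-- Every locally convex closed preordered space whose topology is locally
compact and σ-compact is a convex normally preordered space. -/
theorem convex_normallyPreordered_of_locallyConvex {E : Type*} [TopologicalSpace E]
    [Preorder E]
    (hG : IsClosed {p : E × E | p.1 ≤ p.2})
    (hloc : ∀ x : E, ∃ K : Set E, IsCompact K ∧ K ∈ 𝓝 x)
    (hsigma : ∃ K : ℕ → Set E, (∀ n, IsCompact (K n)) ∧ (⋃ n, K n) = Set.univ)
    (hlc : ∀ x : E, ∀ O ∈ 𝓝 x, ∃ C ∈ 𝓝 x, IsOrdConvex C ∧ C ⊆ O) :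
    (∀ x : E, ∀ O : Set E, IsOpen O → x ∈ O →
      ∃ U V : Set E, IsOpen U ∧ decHull U = U ∧ IsOpen V ∧ incHull V = V ∧
        x ∈ U ∩ V ∧ U ∩ V ⊆ O) ∧
    (∀ x : E, IsClosed (incHull {x}) ∧ IsClosed (decHull {x})) ∧
    (∀ A B : Set E, IsClosed A → decHull A = A → IsClosed B → incHull B = B →
      A ∩ B = ∅ →
      ∃ U V : Set E, IsOpen U ∧ decHull U = U ∧ IsOpen V ∧ incHull V = V ∧
        A ⊆ U ∧ B ⊆ V ∧ U ∩ V = ∅) := by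
  refine ⟨?_, ?_, ?_⟩
  · intro x O hO hxO
    exact convex_sep hG hloc hsigma
      (fun y Oy hOy => by
        obtain ⟨C, h1, h2, h3⟩ := hlc y Oy hOy
        exact ⟨C, h1, h2, h3⟩) x O hO hxO
  · intro x
    exact ⟨isClosed_incHull hG isCompact_singleton,
      isClosed_decHull hG isCompact_singleton⟩
  · intro A B hA hAd hB hBi hAB
    exact normal_sep hG hloc hsigma hA hAd hB hBi hAB
end
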